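/- arXiv:1304.0303 — 9 statements merged into one kernel-verified Lean document; each statement's English description precedes it below -/
import Mathlib

section
/- Let R > 0, H > 0 and let a be any fixed number with 0 < a < R. Define U on the closed disk r ≤ R (where r² = x² + y²) by U(x,y) = (H / (2 ln(a/R)))·(1 − r²/a²) for 0 ≤ r ≤ a, and U(x,y) = H·ln(a/r)/ln(a/R) for a ≤ r ≤ R. Then U is continuously differentiable in the open disk r < R, U < 0 in the open disk r < a where it satisfies the wave equation ∂²U/∂x² − ∂²U/∂y² = 0, U > 0 in the open annulus a < r < R where it satisfies the Laplace equation ∂²U/∂x² + ∂²U/∂y² = 0, U = 0 on the circle r = a, and U = H on the boundary circle r = R. In particular U is a type-changing solution of equation (1) of the Dirichlet problem with constant boundary data H. -/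
open Real Filter Set

/-- Second partial derivative of `U` in the first (x) variable. -/
noncomputable def pxx (U : ℝ × ℝ → ℝ) (p : ℝ × ℝ) : ℝ :=
  deriv (deriv (fun x => U (x, p.2))) p.1

/-- Second partial derivative of `U` in the second (y) variable. -/
noncomputable def pyy (U : ℝ × ℝ → ℝ) (p : ℝ × ℝ) : ℝ :=
  deriv (deriv (fun y => U (p.1, y))) p.2


noncomputable def phiAux (a c : ℝ) (s : ℝ) : ℝ :=
  if s ≤ a ^ 2 then c * (1 - s / a ^ 2) else 2 * c * Real.log (a / Real.sqrt s)

lemma inner_hasDerivAt (a c s : ℝ) :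
    HasDerivAt (fun s => c * (1 - s / a ^ 2)) (-c / a ^ 2) s := by
  have h := (((hasDerivAt_id s).div_const (a ^ 2)).const_sub 1).const_mul c
  refine h.congr_deriv ?_
  ring

lemma outer_aux_hasDerivAt (a c s : ℝ) (hs : 0 < s) :
    HasDerivAt (fun s => 2 * c * (Real.log a - Real.log s / 2)) (-c / s) s := by
  have h := (((Real.hasDerivAt_log hs.ne').div_const 2).const_sub (Real.log a)).const_mul (2 * c)
  refine h.congr_deriv ?_
  field_simp

lemma outer_eq (a c : ℝ) (ha : 0 < a) {s : ℝ} (hs : 0 < s) :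
    2 * c * Real.log (a / Real.sqrt s) = 2 * c * (Real.log a - Real.log s / 2) := by
  rw [Real.log_div ha.ne' (Real.sqrt_ne_zero'.2 hs), Real.log_sqrt hs.le]

lemma outer_hasDerivAt (a c s : ℝ) (ha : 0 < a) (hs : 0 < s) :
    HasDerivAt (fun s => 2 * c * Real.log (a / Real.sqrt s)) (-c / s) s := by
  refine (outer_aux_hasDerivAt a c s hs).congr_of_eventuallyEq ?_
  filter_upwards [eventually_gt_nhds hs] with t ht
  exact outer_eq a c ha ht

lemma phiAux_hasDerivAt (a c : ℝ) (ha : 0 < a) (s : ℝ) :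
    HasDerivAt (phiAux a c) (-c / max s (a ^ 2)) s := by
  have ha2 : 0 < a ^ 2 := by positivity
  rcases lt_trichotomy s (a ^ 2) with h | h | h
  · rw [max_eq_right h.le]
    refine (inner_hasDerivAt a c s).congr_of_eventuallyEq ?_
    filter_upwards [eventually_lt_nhds h] with t ht
    simp [phiAux, ht.le]
  · subst h
    rw [max_self]
    rw [← hasDerivWithinAt_univ, ← Iic_union_Ici (a := a ^ 2)]
    refine HasDerivWithinAt.union ?_ ?_
    · refine ((inner_hasDerivAt a c _).hasDerivWithinAt).congr ?_ ?_
      · intro t ht; simp [phiAux, mem_Iic.1 ht]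
      · simp [phiAux]
    · refine ((outer_hasDerivAt a c _ ha ha2).hasDerivWithinAt).congr ?_ ?_
      · intro t ht
        rcases eq_or_lt_of_le (mem_Ici.1 ht) with rfl | ht'
        · simp [phiAux, Real.sqrt_sq ha.le, div_self ha2.ne', div_self ha.ne']
        · simp [phiAux, not_le.2 ht']
      · simp [phiAux, Real.sqrt_sq ha.le, div_self ha2.ne', div_self ha.ne']
  · rw [max_eq_left h.le]
    refine (outer_hasDerivAt a c s ha (ha2.trans h)).congr_of_eventuallyEq ?_
    filter_upwards [eventually_gt_nhds h] with t ht
    simp [phiAux, not_le.2 ht]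

lemma phiAux_contDiff (a c : ℝ) (ha : 0 < a) : ContDiff ℝ 1 (phiAux a c) := by
  have ha2 : 0 < a ^ 2 := by positivity
  rw [contDiff_one_iff_deriv]
  have hd : deriv (phiAux a c) = fun s => -c / max s (a ^ 2) := by
    funext s; exact (phiAux_hasDerivAt a c ha s).deriv
  constructor
  · exact fun s => (phiAux_hasDerivAt a c ha s).differentiableAt
  · rw [hd]
    exact continuous_const.div (continuous_id.max continuous_const)
      (fun s => (lt_max_of_lt_right ha2).ne')

/-- second derivatives via local equality on an open set -/
lemma deriv2_congr {f g : ℝ → ℝ} {s : Set ℝ} (hs : IsOpen s) {x : ℝ} (hx : x ∈ s)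
    (h : ∀ y ∈ s, f y = g y) : deriv (deriv f) x = deriv (deriv g) x := by
  have h1 : ∀ y ∈ s, deriv f y = deriv g y := fun y hy =>
    Filter.EventuallyEq.deriv_eq (eventually_of_mem (hs.mem_nhds hy) h)
  exact Filter.EventuallyEq.deriv_eq (eventually_of_mem (hs.mem_nhds hx) h1)

lemma second_deriv_inner (c a k x : ℝ) (ha : a ≠ 0) :
    deriv (deriv (fun t => c * (1 - (t ^ 2 + k) / a ^ 2))) x = -(2 * c) / a ^ 2 := by
  have h1 : deriv (fun t => c * (1 - (t ^ 2 + k) / a ^ 2)) = fun t => (-(2 * c) / a ^ 2) * t := by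
    funext t
    have h := ((((hasDerivAt_pow 2 t).add_const k).div_const (a ^ 2)).const_sub 1).const_mul c
    rw [h.deriv]
    push_cast
    ring
  rw [h1]
  have h2 := (hasDerivAt_id x).const_mul (-(2 * c) / a ^ 2)
  simp only [id_eq] at h2
  rw [h2.deriv, mul_one]

lemma second_deriv_outer (c K k x : ℝ) (hx : 0 < x ^ 2 + k) :
    deriv (deriv (fun t => K - c * Real.log (t ^ 2 + k))) x
      = -(2 * c) * (k - x ^ 2) / (x ^ 2 + k) ^ 2 := by
  have hs : IsOpen {t : ℝ | 0 < t ^ 2 + k} := isOpen_lt continuous_const ((continuous_pow 2).add continuous_const)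
  have h1 : ∀ t ∈ {t : ℝ | 0 < t ^ 2 + k},
      deriv (fun t => K - c * Real.log (t ^ 2 + k)) t = -(2 * c) * (t / (t ^ 2 + k)) := by
    intro t ht
    have h := ((((hasDerivAt_pow 2 t).add_const k).log (ne_of_gt ht)).const_mul c).const_sub K
    rw [h.deriv]
    push_cast
    ring
  have h2 : deriv (deriv (fun t => K - c * Real.log (t ^ 2 + k))) x
      = deriv (fun t => -(2 * c) * (t / (t ^ 2 + k))) x :=
    Filter.EventuallyEq.deriv_eq (eventually_of_mem (hs.mem_nhds hx) h1)
  rw [h2]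
  have h3 := (((hasDerivAt_id x).div ((hasDerivAt_pow 2 x).add_const k) (ne_of_gt hx)).const_mul
    (-(2 * c)))
  simp only [id_eq] at h3
  rw [show deriv (fun t => -(2 * c) * (t / (t ^ 2 + k))) x = _ from h3.deriv]
  norm_num
  ring

/-- The piecewise function `U = H/(2 ln(a/R)) (1 - r²/a²)` for `r ≤ a`,
`U = H ln(a/r)/ln(a/R)` for `a ≤ r ≤ R` is a type-changing solution of the
Dirichlet problem for equation (1) with constant boundary data `H > 0`:
it is C¹ in the open disk `r < R`, negative and a wave-equation solution in
`r < a`, positive and harmonic in the annulus `a < r < R`, vanishes on `r = a`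
and equals `H` on `r = R`. -/
theorem model_dirichlet_eq1_type_changing
    (R H a : ℝ) (hR : 0 < R) (hH : 0 < H) (ha0 : 0 < a) (haR : a < R)
    (U : ℝ × ℝ → ℝ)
    (hU : ∀ p : ℝ × ℝ, U p =
      if p.1 ^ 2 + p.2 ^ 2 ≤ a ^ 2 then
        H / (2 * Real.log (a / R)) * (1 - (p.1 ^ 2 + p.2 ^ 2) / a ^ 2)
      else
        H * Real.log (a / Real.sqrt (p.1 ^ 2 + p.2 ^ 2)) / Real.log (a / R)) :
    ContDiffOn ℝ 1 U {p : ℝ × ℝ | p.1 ^ 2 + p.2 ^ 2 < R ^ 2} ∧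
    (∀ p : ℝ × ℝ, p.1 ^ 2 + p.2 ^ 2 < a ^ 2 →
      U p < 0 ∧ pxx U p - pyy U p = 0) ∧
    (∀ p : ℝ × ℝ, a ^ 2 < p.1 ^ 2 + p.2 ^ 2 → p.1 ^ 2 + p.2 ^ 2 < R ^ 2 →
      0 < U p ∧ pxx U p + pyy U p = 0) ∧
    (∀ p : ℝ × ℝ, p.1 ^ 2 + p.2 ^ 2 = a ^ 2 → U p = 0) ∧
    (∀ p : ℝ × ℝ, p.1 ^ 2 + p.2 ^ 2 = R ^ 2 → U p = H) := by
  set L := Real.log (a / R) with hLdef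
  have hL : L < 0 := Real.log_neg (div_pos ha0 hR) ((div_lt_one hR).2 haR)
  have hLne : L ≠ 0 := hL.ne
  set c := H / (2 * L) with hcdef
  have hc : c < 0 := div_neg_of_pos_of_neg hH (by linarith)
  have ha2 : (0:ℝ) < a ^ 2 := by positivity
  have hUphi : ∀ p : ℝ × ℝ, U p = phiAux a c (p.1 ^ 2 + p.2 ^ 2) := by
    intro p
    rw [hU p]
    unfold phiAux
    split_ifs with h
    · rfl
    · rw [hcdef]; field_simp
  refine ⟨?_, ?_, ?_, ?_, ?_⟩
  · have hUeq : U = fun p : ℝ × ℝ => phiAux a c (p.1 ^ 2 + p.2 ^ 2) := funext hUphi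
    rw [hUeq]
    exact ((phiAux_contDiff a c ha0).comp
      ((contDiff_fst.pow 2).add (contDiff_snd.pow 2))).contDiffOn
  · intro p hp
    constructor
    · rw [hU p, if_pos hp.le]
      exact mul_neg_of_neg_of_pos hc (by
        have : (p.1 ^ 2 + p.2 ^ 2) / a ^ 2 < 1 := (div_lt_one ha2).2 hp
        linarith)
    · have hsx : IsOpen {x : ℝ | x ^ 2 + p.2 ^ 2 < a ^ 2} :=
        isOpen_lt ((continuous_pow 2).add continuous_const) continuous_const
      have hsy : IsOpen {y : ℝ | y ^ 2 + p.1 ^ 2 < a ^ 2} :=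
        isOpen_lt ((continuous_pow 2).add continuous_const) continuous_const
      have hx : pxx U p = -(2 * c) / a ^ 2 := by
        unfold pxx
        have hcongr : deriv (deriv (fun x => U (x, p.2))) p.1
            = deriv (deriv (fun t : ℝ => c * (1 - (t ^ 2 + p.2 ^ 2) / a ^ 2))) p.1 :=
          deriv2_congr hsx hp (fun y hy => by rw [hU]; exact if_pos hy.le)
        rw [hcongr]
        exact second_deriv_inner c a (p.2 ^ 2) p.1 ha0.ne'
      have hy : pyy U p = -(2 * c) / a ^ 2 := by
        unfold pyy
        have hp' : p.2 ^ 2 + p.1 ^ 2 < a ^ 2 := by rw [add_comm]; exact hp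
        have hcongr : deriv (deriv (fun y => U (p.1, y))) p.2
            = deriv (deriv (fun t : ℝ => c * (1 - (t ^ 2 + p.1 ^ 2) / a ^ 2))) p.2 :=
          deriv2_congr hsy hp' (fun y hy => by
            have hy' : y ^ 2 + p.1 ^ 2 < a ^ 2 := hy
            rw [hU]
            rw [if_pos (show p.1 ^ 2 + y ^ 2 ≤ a ^ 2 by linarith)]
            ring)
        rw [hcongr]
        exact second_deriv_inner c a (p.1 ^ 2) p.2 ha0.ne'
      rw [hx, hy, sub_self]
  · intro p hp1 hp2
    have hspos : (0:ℝ) < p.1 ^ 2 + p.2 ^ 2 := ha2.trans hp1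
    constructor
    · rw [hU p, if_neg (not_le.2 hp1)]
      have hsa : a < Real.sqrt (p.1 ^ 2 + p.2 ^ 2) := (Real.lt_sqrt ha0.le).2 hp1
      have hlog : Real.log (a / Real.sqrt (p.1 ^ 2 + p.2 ^ 2)) < 0 :=
        Real.log_neg (div_pos ha0 (ha0.trans hsa)) ((div_lt_one (ha0.trans hsa)).2 hsa)
      exact div_pos_iff.2 (Or.inr ⟨mul_neg_of_pos_of_neg hH hlog, hL⟩)
    · set K := H * Real.log a / L with hKdef
      have key : ∀ s : ℝ, a ^ 2 < s →
          H * Real.log (a / Real.sqrt s) / L = K - c * Real.log s := by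
        intro s hs
        have hs0 : (0:ℝ) < s := ha2.trans hs
        rw [Real.log_div ha0.ne' (Real.sqrt_ne_zero'.2 hs0), Real.log_sqrt hs0.le,
          hKdef, hcdef]
        field_simp
      have hsx : IsOpen {x : ℝ | a ^ 2 < x ^ 2 + p.2 ^ 2} :=
        isOpen_lt continuous_const ((continuous_pow 2).add continuous_const)
      have hsy : IsOpen {y : ℝ | a ^ 2 < y ^ 2 + p.1 ^ 2} :=
        isOpen_lt continuous_const ((continuous_pow 2).add continuous_const)
      have hx : pxx U p = -(2 * c) * (p.2 ^ 2 - p.1 ^ 2) / (p.1 ^ 2 + p.2 ^ 2) ^ 2 := by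
        unfold pxx
        have hcongr : deriv (deriv (fun x => U (x, p.2))) p.1
            = deriv (deriv (fun t : ℝ => K - c * Real.log (t ^ 2 + p.2 ^ 2))) p.1 :=
          deriv2_congr hsx hp1 (fun y hy => by
            have hy' : a ^ 2 < y ^ 2 + p.2 ^ 2 := hy
            rw [hU]
            rw [if_neg (not_le.2 (show a ^ 2 < y ^ 2 + p.2 ^ 2 from hy'))]
            exact key _ hy')
        rw [hcongr]
        exact second_deriv_outer c K (p.2 ^ 2) p.1 hspos
      have hy : pyy U p = -(2 * c) * (p.1 ^ 2 - p.2 ^ 2) / (p.2 ^ 2 + p.1 ^ 2) ^ 2 := by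
        unfold pyy
        have hp' : a ^ 2 < p.2 ^ 2 + p.1 ^ 2 := by rw [add_comm]; exact hp1
        have hcongr : deriv (deriv (fun y => U (p.1, y))) p.2
            = deriv (deriv (fun t : ℝ => K - c * Real.log (t ^ 2 + p.1 ^ 2))) p.2 :=
          deriv2_congr hsy hp' (fun y hy => by
            have hy' : a ^ 2 < y ^ 2 + p.1 ^ 2 := hy
            have hy'' : a ^ 2 < p.1 ^ 2 + y ^ 2 := by linarith
            rw [hU]
            rw [if_neg (not_le.2 hy'')]
            rw [key _ hy'', add_comm (p.1 ^ 2) (y ^ 2)])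
        rw [hcongr]
        exact second_deriv_outer c K (p.1 ^ 2) p.2 (by rw [add_comm]; exact hspos)
      rw [hx, hy]
      ring
  · intro p hp
    rw [hU p, if_pos hp.le, hp, div_self ha2.ne']
    ring
  · intro p hp
    have hlt : a ^ 2 < R ^ 2 := by nlinarith
    rw [hU p, if_neg (by rw [hp]; exact not_le.2 hlt), hp, Real.sqrt_sq hR.le,
      mul_div_assoc, div_self hLne, mul_one]
end

section
/- Let R > 0, H ∈ ℝ, C ∈ ℝ and a ∈ (0,R). Define U on the closed disk r ≤ R by U(x,y) = C(r² − a²) + 2Ca²·ln(a/R) + H for 0 ≤ r ≤ a, and U(x,y) = 2Ca²·ln(r/R) + H for a ≤ r ≤ R. Then U is continuously differentiable on the open disk r < R, satisfies the wave equation ∂²U/∂x² − ∂²U/∂y² = 0 in the open disk r < a, satisfies the Laplace equation ∂²U/∂x² + ∂²U/∂y² = 0 in the open annulus a < r < R, and equals H on the boundary circle r = R. In particular (∂²U/∂x²)² − (∂²U/∂y²)² = 0 holds in both open regions, so U solves the Dirichlet problem for equation (2) with constant boundary data H. -/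
open Filter Set

/-- Second-derivative computation for a function locally equal to `c0*s^2 + d`. -/
lemma aux_inner_dd (c0 d : ℝ) {x : ℝ} (f : ℝ → ℝ)
    (hf : f =ᶠ[nhds x] fun s => c0 * s ^ 2 + d) :
    deriv (deriv f) x = 2 * c0 := by
  have h1 : deriv f =ᶠ[nhds x] deriv (fun s => c0 * s ^ 2 + d) := hf.deriv
  have h2 : deriv (fun s => c0 * s ^ 2 + d) = fun s => c0 * (2 * s) := by
    funext s
    have : HasDerivAt (fun s : ℝ => c0 * s ^ 2 + d) (c0 * (2 * s)) s := by
      simpa using ((hasDerivAt_pow 2 s).const_mul c0).add_const d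
    exact this.deriv
  rw [h1.deriv_eq, h2]
  have h3 : HasDerivAt (fun s : ℝ => c0 * (2 * s)) (2 * c0) x := by
    simpa [mul_comm] using ((hasDerivAt_id x).const_mul 2).const_mul c0
  exact h3.deriv

/-- HasDerivAt for `c0 * log (s^2+y^2) + d`. -/
lemma aux_log_hd (c0 d y : ℝ) {s : ℝ} (hne : s ^ 2 + y ^ 2 ≠ 0) :
    HasDerivAt (fun s => c0 * Real.log (s ^ 2 + y ^ 2) + d)
      (c0 * (2 * s) / (s ^ 2 + y ^ 2)) s := by
  have hv : HasDerivAt (fun s : ℝ => s ^ 2 + y ^ 2) (2 * s) s := by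
    simpa using (hasDerivAt_pow 2 s).add_const (y ^ 2)
  have h := (((Real.hasDerivAt_log hne).comp s hv).const_mul c0).add_const d
  have e : c0 * (2 * s) / (s ^ 2 + y ^ 2) = c0 * ((s ^ 2 + y ^ 2)⁻¹ * (2 * s)) := by ring
  rw [e]; exact h

/-- Second-derivative computation for a function locally equal to `c0*log(s²+y²)+d`,
in the region `s²+y² > A > 0`. -/
lemma aux_log_dd (c0 d y A : ℝ) (hA : 0 < A) {x : ℝ} (hx : A < x ^ 2 + y ^ 2)
    (f : ℝ → ℝ) (hf : f =ᶠ[nhds x] fun s => c0 * Real.log (s ^ 2 + y ^ 2) + d) :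
    deriv (deriv f) x = c0 * 2 * (y ^ 2 - x ^ 2) / (x ^ 2 + y ^ 2) ^ 2 := by
  have hopen : IsOpen {s : ℝ | A < s ^ 2 + y ^ 2} :=
    isOpen_lt continuous_const (by fun_prop)
  have hev : ∀ᶠ s in nhds x, A < s ^ 2 + y ^ 2 := hopen.mem_nhds hx
  have h1 : deriv f =ᶠ[nhds x] deriv (fun s => c0 * Real.log (s ^ 2 + y ^ 2) + d) := hf.deriv
  have h2 : deriv (fun s => c0 * Real.log (s ^ 2 + y ^ 2) + d)
      =ᶠ[nhds x] fun s => c0 * (2 * s) / (s ^ 2 + y ^ 2) := by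
    filter_upwards [hev] with s hs
    exact (aux_log_hd c0 d y (ne_of_gt (hA.trans hs))).deriv
  rw [(h1.trans h2).deriv_eq]
  have hne : x ^ 2 + y ^ 2 ≠ 0 := ne_of_gt (hA.trans hx)
  have hu : HasDerivAt (fun s : ℝ => c0 * (2 * s)) (c0 * 2) x := by
    simpa [mul_comm] using ((hasDerivAt_id x).const_mul 2).const_mul c0
  have hv : HasDerivAt (fun s : ℝ => s ^ 2 + y ^ 2) (2 * x) x := by
    simpa using (hasDerivAt_pow 2 x).add_const (y ^ 2)
  have h := hu.div hv hne
  rw [show deriv (fun s => c0 * (2 * s) / (s ^ 2 + y ^ 2)) x = _ from h.deriv]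
  field_simp
  ring

/-- The piecewise function `U = C(r² - a²) + 2Ca² ln(a/R) + H` for `r ≤ a`,
`U = 2Ca² ln(r/R) + H` for `a ≤ r ≤ R` solves the Dirichlet problem for
equation (2) with constant boundary data `H`: it is C¹ in the open disk
`r < R`, satisfies the wave equation in `r < a` and the Laplace equation in
`a < r < R` (so `(∂²U/∂x²)² - (∂²U/∂y²)² = 0` in both open regions), and
equals `H` on the boundary circle `r = R`. -/
theorem model_dirichlet_eq2_type_changing
    (R H C a : ℝ) (hR : 0 < R) (ha : a ∈ Set.Ioo 0 R)
    (U : ℝ × ℝ → ℝ)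
    (hU : ∀ p : ℝ × ℝ, U p =
      if p.1 ^ 2 + p.2 ^ 2 ≤ a ^ 2 then
        C * (p.1 ^ 2 + p.2 ^ 2 - a ^ 2) + 2 * C * a ^ 2 * Real.log (a / R) + H
      else
        2 * C * a ^ 2 * Real.log (Real.sqrt (p.1 ^ 2 + p.2 ^ 2) / R) + H) :
    ContDiffOn ℝ 1 U {p : ℝ × ℝ | p.1 ^ 2 + p.2 ^ 2 < R ^ 2} ∧
    (∀ p : ℝ × ℝ, p.1 ^ 2 + p.2 ^ 2 < a ^ 2 → pxx U p - pyy U p = 0) ∧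
    (∀ p : ℝ × ℝ, a ^ 2 < p.1 ^ 2 + p.2 ^ 2 → p.1 ^ 2 + p.2 ^ 2 < R ^ 2 →
      pxx U p + pyy U p = 0) ∧
    (∀ p : ℝ × ℝ, p.1 ^ 2 + p.2 ^ 2 = R ^ 2 → U p = H) ∧
    (∀ p : ℝ × ℝ, (p.1 ^ 2 + p.2 ^ 2 < a ^ 2 ∨
        (a ^ 2 < p.1 ^ 2 + p.2 ^ 2 ∧ p.1 ^ 2 + p.2 ^ 2 < R ^ 2)) →
      (pxx U p) ^ 2 - (pyy U p) ^ 2 = 0) := by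
  obtain ⟨ha0, haR⟩ := ha
  have ha2 : (0 : ℝ) < a ^ 2 := by positivity
  -- The 1D profile in the variable t = r².
  set g : ℝ → ℝ := fun t =>
    if t ≤ a ^ 2 then C * (t - a ^ 2) + 2 * C * a ^ 2 * Real.log (a / R) + H
    else C * a ^ 2 * Real.log t - 2 * C * a ^ 2 * Real.log R + H with hgdef
  have hUg : U = fun p : ℝ × ℝ => g (p.1 ^ 2 + p.2 ^ 2) := by
    funext p
    rw [hU p]
    by_cases h : p.1 ^ 2 + p.2 ^ 2 ≤ a ^ 2
    · simp [hgdef, h]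
    · push_neg at h
      have ht : 0 < p.1 ^ 2 + p.2 ^ 2 := ha2.trans h
      simp only [hgdef, if_neg (not_le.mpr h)]
      rw [Real.log_div (Real.sqrt_pos.mpr ht).ne' hR.ne', Real.log_sqrt ht.le]
      ring
  -- derivative of g
  set g' : ℝ → ℝ := fun t => C * a ^ 2 / max t (a ^ 2) with hg'def
  have hf1 : ∀ s : ℝ, HasDerivAt
      (fun s => C * (s - a ^ 2) + 2 * C * a ^ 2 * Real.log (a / R) + H) C s := by
    intro s
    simpa using (((hasDerivAt_id s).sub_const (a ^ 2)).const_mul C).add_const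
      (2 * C * a ^ 2 * Real.log (a / R)) |>.add_const H
  have hf2 : ∀ s : ℝ, s ≠ 0 → HasDerivAt
      (fun s => C * a ^ 2 * Real.log s - 2 * C * a ^ 2 * Real.log R + H)
      (C * a ^ 2 / s) s := by
    intro s hs
    have h := (((Real.hasDerivAt_log hs).const_mul (C * a ^ 2)).sub_const
      (2 * C * a ^ 2 * Real.log R)).add_const H
    simpa [div_eq_mul_inv] using h
  have hval : C * (a ^ 2 - a ^ 2) + 2 * C * a ^ 2 * Real.log (a / R) + H
      = C * a ^ 2 * Real.log (a ^ 2) - 2 * C * a ^ 2 * Real.log R + H := by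
    rw [Real.log_div ha0.ne' hR.ne', Real.log_pow]
    push_cast
    ring
  have hderiv : ∀ t : ℝ, HasDerivAt g (g' t) t := by
    intro t
    rcases lt_trichotomy t (a ^ 2) with h | h | h
    · have hg't : g' t = C := by
        rw [hg'def]
        simp only [max_eq_right h.le]
        field_simp
      rw [hg't]
      refine (hf1 t).congr_of_eventuallyEq ?_
      filter_upwards [eventually_lt_nhds h] with s hs
      simp [hgdef, hs.le]
    · subst h
      have hg't : g' (a ^ 2) = C := by
        rw [hg'def]; simp only [max_self]; field_simp
      rw [hg't]
      have hleft : HasDerivWithinAt g C (Set.Iic (a ^ 2)) (a ^ 2) := by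
        refine ((hf1 (a ^ 2)).hasDerivWithinAt).congr ?_ ?_
        · intro s hs; simp [hgdef, (mem_Iic.mp hs)]
        · simp [hgdef]
      have hright : HasDerivWithinAt g C (Set.Ici (a ^ 2)) (a ^ 2) := by
        have h2 := (hf2 (a ^ 2) ha2.ne').hasDerivWithinAt (s := Set.Ici (a ^ 2))
        have : C * a ^ 2 / a ^ 2 = C := by field_simp
        rw [this] at h2
        refine h2.congr ?_ ?_
        · intro s hs
          rcases eq_or_lt_of_le (mem_Ici.mp hs) with h | h
          · rw [hgdef]; simp only [← h, le_refl, if_pos]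
            exact hval
          · simp [hgdef, not_le.mpr h]
        · rw [hgdef]; simp only [le_refl, if_pos]
          exact hval
      have := hleft.union hright
      rw [Set.Iic_union_Ici] at this
      exact hasDerivWithinAt_univ.mp this
    · have hg't : g' t = C * a ^ 2 / t := by
        rw [hg'def]; simp only [max_eq_left h.le]
      rw [hg't]
      refine (hf2 t (ha2.trans h).ne').congr_of_eventuallyEq ?_
      filter_upwards [eventually_gt_nhds h] with s hs
      simp [hgdef, not_le.mpr hs]
  have hg'cont : Continuous g' := by
    apply continuous_const.div (continuous_id.max continuous_const)
    intro t
    exact ne_of_gt (lt_of_lt_of_le ha2 (le_max_right _ _))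
  have hgC1 : ContDiff ℝ 1 g := by
    rw [contDiff_one_iff_deriv]
    refine ⟨fun t => (hderiv t).differentiableAt, ?_⟩
    have : deriv g = g' := funext fun t => (hderiv t).deriv
    rw [this]; exact hg'cont
  have hq : ContDiff ℝ 1 (fun p : ℝ × ℝ => p.1 ^ 2 + p.2 ^ 2) := by fun_prop
  have hUC1 : ContDiff ℝ 1 U := by rw [hUg]; exact hgC1.comp hq
  -- eventual descriptions of U near points in each open region
  have hinner : ∀ p : ℝ × ℝ, p.1 ^ 2 + p.2 ^ 2 < a ^ 2 →
      pxx U p - pyy U p = 0 := by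
    intro p hp
    have hopen : IsOpen {q : ℝ × ℝ | q.1 ^ 2 + q.2 ^ 2 < a ^ 2} :=
      isOpen_lt (by fun_prop) continuous_const
    have hxev : (fun x => U (x, p.2)) =ᶠ[nhds p.1]
        fun x => C * x ^ 2 + (C * (p.2 ^ 2 - a ^ 2) + 2 * C * a ^ 2 * Real.log (a / R) + H) := by
      have hox : IsOpen {x : ℝ | x ^ 2 + p.2 ^ 2 < a ^ 2} :=
        isOpen_lt (by fun_prop) continuous_const
      filter_upwards [hox.mem_nhds hp] with x hx
      rw [hU (x, p.2)]
      simp only [if_pos (le_of_lt hx)]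
      ring
    have hyev : (fun y => U (p.1, y)) =ᶠ[nhds p.2]
        fun y => C * y ^ 2 + (C * (p.1 ^ 2 - a ^ 2) + 2 * C * a ^ 2 * Real.log (a / R) + H) := by
      have hoy : IsOpen {y : ℝ | p.1 ^ 2 + y ^ 2 < a ^ 2} :=
        isOpen_lt (by fun_prop) continuous_const
      filter_upwards [hoy.mem_nhds hp] with y hy
      rw [hU (p.1, y)]
      simp only [if_pos (le_of_lt hy)]
      ring
    rw [pxx, pyy, aux_inner_dd _ _ _ hxev, aux_inner_dd _ _ _ hyev]
    ring
  have hannulus : ∀ p : ℝ × ℝ, a ^ 2 < p.1 ^ 2 + p.2 ^ 2 →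
      pxx U p + pyy U p = 0 := by
    intro p hp
    have hxev : (fun x => U (x, p.2)) =ᶠ[nhds p.1]
        fun x => (C * a ^ 2) * Real.log (x ^ 2 + p.2 ^ 2)
          + (- (2 * C * a ^ 2 * Real.log R) + H) := by
      have hox : IsOpen {x : ℝ | a ^ 2 < x ^ 2 + p.2 ^ 2} :=
        isOpen_lt continuous_const (by fun_prop)
      filter_upwards [hox.mem_nhds hp] with x hx
      rw [hU (x, p.2)]
      simp only [if_neg (not_le.mpr hx)]
      have ht : (0 : ℝ) < x ^ 2 + p.2 ^ 2 := ha2.trans hx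
      rw [Real.log_div (Real.sqrt_pos.mpr ht).ne' hR.ne', Real.log_sqrt ht.le]
      ring
    have hyev : (fun y => U (p.1, y)) =ᶠ[nhds p.2]
        fun y => (C * a ^ 2) * Real.log (y ^ 2 + p.1 ^ 2)
          + (- (2 * C * a ^ 2 * Real.log R) + H) := by
      have hoy : IsOpen {y : ℝ | a ^ 2 < p.1 ^ 2 + y ^ 2} :=
        isOpen_lt continuous_const (by fun_prop)
      filter_upwards [hoy.mem_nhds hp] with y hy
      rw [hU (p.1, y)]
      simp only [if_neg (not_le.mpr hy)]
      have ht : (0 : ℝ) < p.1 ^ 2 + y ^ 2 := ha2.trans hy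
      rw [Real.log_div (Real.sqrt_pos.mpr ht).ne' hR.ne', Real.log_sqrt ht.le,
        add_comm (p.1 ^ 2) (y ^ 2)]
      ring
    have hp' : a ^ 2 < p.2 ^ 2 + p.1 ^ 2 := by rw [add_comm]; exact hp
    rw [pxx, pyy, aux_log_dd _ _ _ _ ha2 hp _ hxev, aux_log_dd _ _ _ _ ha2 hp' _ hyev,
      add_comm (p.2 ^ 2) (p.1 ^ 2), ← add_div,
      show C * a ^ 2 * 2 * (p.2 ^ 2 - p.1 ^ 2) + C * a ^ 2 * 2 * (p.1 ^ 2 - p.2 ^ 2) = 0 by ring,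
      zero_div]
  refine ⟨hUC1.contDiffOn, hinner, fun p hp _ => hannulus p hp, ?_, ?_⟩
  · intro p hp
    have hnot : ¬ p.1 ^ 2 + p.2 ^ 2 ≤ a ^ 2 := by
      rw [hp]
      exact not_le.mpr (by nlinarith)
    rw [hU p, if_neg hnot, hp, Real.sqrt_sq hR.le, div_self hR.ne', Real.log_one]
    ring
  · intro p hp
    rcases hp with hp | ⟨hp, _⟩
    · have h := hinner p hp
      have : pxx U p = pyy U p := by linarith
      rw [this]; ring
    · have h := hannulus p hp
      have : pxx U p = - pyy U p := by linarith
      rw [this]; ring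
end

section
/- Let R > 0, K > 0 and a ∈ (0,R). Define U on the closed disk r ≤ R by U(x,y) = (KR/2)·(r²/a² − 1) for 0 ≤ r ≤ a, and U(x,y) = KR·ln(r/a) for a ≤ r ≤ R. Then U is continuously differentiable on the open disk r < R, U < 0 in the open disk r < a where it satisfies the wave equation ∂²U/∂x² − ∂²U/∂y² = 0, U > 0 in the open annulus a < r < R where it satisfies the Laplace equation ∂²U/∂x² + ∂²U/∂y² = 0, and the outward radial derivative ∂U/∂r equals K on the boundary circle r = R. Hence U is a type-changing solution of the Neumann problem for equation (1) with constant boundary flux K. -/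
section aux

variable {K R a : ℝ}

/-- The radial profile as a function of `s = r²`. -/
noncomputable def Fprof (K R a : ℝ) (s : ℝ) : ℝ :=
  if s ≤ a ^ 2 then K * R / 2 * (s / a ^ 2 - 1)
  else K * R * Real.log (Real.sqrt s / a)

lemma Fprof_eq_log (ha : 0 < a) {t : ℝ} (ht : a ^ 2 ≤ t) :
    Fprof K R a t = K * R * (Real.log t / 2 - Real.log a) := by
  have ha2 : (0:ℝ) < a ^ 2 := by positivity
  have ht0 : 0 < t := lt_of_lt_of_le ha2 ht
  rcases eq_or_lt_of_le ht with h | h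
  · simp only [Fprof, ← h, le_refl, if_pos]
    rw [div_self ha2.ne', Real.log_pow]
    push_cast; ring
  · simp only [Fprof, not_le.mpr h, if_neg, not_false_iff]
    rw [Real.log_div (Real.sqrt_ne_zero'.mpr ht0) ha.ne', Real.log_sqrt ht0.le]

lemma Fprof_hasDerivAt (ha : 0 < a) (s : ℝ) :
    HasDerivAt (Fprof K R a) (K * R / (2 * max (a ^ 2) s)) s := by
  have ha2 : (0:ℝ) < a ^ 2 := by positivity
  have hq' : ∀ t : ℝ, HasDerivAt (fun t => K * R / 2 * (t / a ^ 2 - 1))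
      (K * R / (2 * a ^ 2)) t := by
    intro t
    have h1 : HasDerivAt (fun t : ℝ => t / a ^ 2 - 1) (1 / a ^ 2) t := by
      simpa using ((hasDerivAt_id t).div_const (a ^ 2)).sub_const 1
    have := h1.const_mul (K * R / 2)
    refine this.congr_deriv ?_; ring
  have hl' : ∀ t : ℝ, 0 < t →
      HasDerivAt (fun t => K * R * (Real.log t / 2 - Real.log a)) (K * R / (2 * t)) t := by
    intro t ht
    have h1 : HasDerivAt (fun t : ℝ => Real.log t / 2 - Real.log a) (t⁻¹ / 2) t :=
      ((Real.hasDerivAt_log ht.ne').div_const 2).sub_const _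
    have := h1.const_mul (K * R)
    refine this.congr_deriv ?_; ring
  rcases lt_trichotomy s (a ^ 2) with h | h | h
  · rw [max_eq_left h.le]
    refine (hq' s).congr_of_eventuallyEq ?_
    filter_upwards [eventually_lt_nhds h] with t ht
    simp only [Fprof, if_pos ht.le]
  · subst h
    rw [max_self]
    have h1 : HasDerivWithinAt (Fprof K R a) (K * R / (2 * a ^ 2)) (Set.Iic (a ^ 2)) (a ^ 2) := by
      refine ((hq' (a ^ 2)).hasDerivWithinAt).congr ?_ ?_
      · intro t ht; simp only [Fprof, if_pos (Set.mem_Iic.mp ht)]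
      · simp only [Fprof, le_refl, if_pos]
    have h2 : HasDerivWithinAt (Fprof K R a) (K * R / (2 * a ^ 2)) (Set.Ici (a ^ 2)) (a ^ 2) := by
      refine ((hl' (a ^ 2) ha2).hasDerivWithinAt).congr ?_ ?_
      · intro t ht; exact Fprof_eq_log ha (Set.mem_Ici.mp ht)
      · exact Fprof_eq_log ha le_rfl
    have h3 := h1.union h2
    rw [Set.Iic_union_Ici] at h3
    exact hasDerivWithinAt_univ.mp h3
  · rw [max_eq_right h.le]
    refine ((hl' s (ha2.trans h)).congr_of_eventuallyEq ?_)
    filter_upwards [eventually_gt_nhds h] with t ht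
    exact Fprof_eq_log ha ht.le

/-- Second derivative of a slice in the elliptic (inner, quadratic) region. -/
lemma deriv2_inner (ha : 0 < a) (c x : ℝ) (hx : x ^ 2 + c < a ^ 2) :
    deriv (deriv (fun t : ℝ => Fprof K R a (t ^ 2 + c))) x = K * R / a ^ 2 := by
  have hopen : IsOpen {t : ℝ | t ^ 2 + c < a ^ 2} :=
    isOpen_lt (by fun_prop) continuous_const
  have hev : (fun t : ℝ => Fprof K R a (t ^ 2 + c)) =ᶠ[nhds x]
      fun t => K * R / (2 * a ^ 2) * t ^ 2 + K * R / 2 * (c / a ^ 2 - 1) := by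
    filter_upwards [hopen.mem_nhds hx] with t ht
    simp only [Fprof, if_pos (le_of_lt ht)]
    field_simp; ring
  rw [hev.deriv.deriv_eq]
  have hd1 : deriv (fun t : ℝ => K * R / (2 * a ^ 2) * t ^ 2 + K * R / 2 * (c / a ^ 2 - 1))
      = fun t => K * R / a ^ 2 * t := by
    funext t
    have h1 : HasDerivAt (fun t : ℝ => K * R / (2 * a ^ 2) * t ^ 2 + K * R / 2 * (c / a ^ 2 - 1))
        (K * R / a ^ 2 * t) t := by
      have := ((hasDerivAt_pow 2 t).const_mul (K * R / (2 * a ^ 2))).add_const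
        (K * R / 2 * (c / a ^ 2 - 1))
      refine this.congr_deriv ?_
      push_cast; ring
    exact h1.deriv
  rw [hd1]
  have h2 : HasDerivAt (fun t : ℝ => K * R / a ^ 2 * t) (K * R / a ^ 2) x := by
    simpa using (hasDerivAt_id x).const_mul (K * R / a ^ 2)
  exact h2.deriv

/-- Second derivative of a slice in the hyperbolic... err, outer (logarithmic) region. -/
lemma deriv2_outer (ha : 0 < a) (c x : ℝ) (hx : a ^ 2 < x ^ 2 + c) :
    deriv (deriv (fun t : ℝ => Fprof K R a (t ^ 2 + c))) x
      = K * R * (c - x ^ 2) / (x ^ 2 + c) ^ 2 := by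
  have ha2 : (0:ℝ) < a ^ 2 := by positivity
  have hopen : IsOpen {t : ℝ | a ^ 2 < t ^ 2 + c} :=
    isOpen_lt continuous_const (by fun_prop)
  have hmem : x ∈ {t : ℝ | a ^ 2 < t ^ 2 + c} := hx
  have hev : (fun t : ℝ => Fprof K R a (t ^ 2 + c)) =ᶠ[nhds x]
      fun t => K * R * (Real.log (t ^ 2 + c) / 2 - Real.log a) := by
    filter_upwards [hopen.mem_nhds hmem] with t ht
    exact Fprof_eq_log ha (le_of_lt ht)
  rw [hev.deriv.deriv_eq]
  have hev2 : deriv (fun t : ℝ => K * R * (Real.log (t ^ 2 + c) / 2 - Real.log a))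
      =ᶠ[nhds x] fun t => K * R * t / (t ^ 2 + c) := by
    filter_upwards [hopen.mem_nhds hmem] with t ht
    have ht0 : (0:ℝ) < t ^ 2 + c := ha2.trans ht
    have h1 : HasDerivAt (fun t : ℝ => t ^ 2 + c) (2 * t) t := by
      simpa using (hasDerivAt_pow 2 t).add_const c
    have h2 : HasDerivAt (fun t : ℝ => K * R * (Real.log (t ^ 2 + c) / 2 - Real.log a))
        (K * R * t / (t ^ 2 + c)) t := by
      have := (((h1.log ht0.ne').div_const 2).sub_const (Real.log a)).const_mul (K * R)
      refine this.congr_deriv ?_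
      ring
    exact h2.deriv
  rw [hev2.deriv_eq]
  have ht0 : (0:ℝ) < x ^ 2 + c := ha2.trans hx
  have h1 : HasDerivAt (fun t : ℝ => t ^ 2 + c) (2 * x) x := by
    simpa using (hasDerivAt_pow 2 x).add_const c
  have h2 : HasDerivAt (fun t : ℝ => K * R * t) (K * R) x := by
    simpa using (hasDerivAt_id x).const_mul (K * R)
  have h3 := h2.div h1 ht0.ne'
  have h4 : (K * R * (x ^ 2 + c) - K * R * x * (2 * x)) / (x ^ 2 + c) ^ 2
      = K * R * (c - x ^ 2) / (x ^ 2 + c) ^ 2 := by ring_nf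
  rw [h4] at h3
  exact h3.deriv

end aux

/-- The piecewise function `U = (KR/2)(r²/a² - 1)` for `r ≤ a`,
`U = KR ln(r/a)` for `a ≤ r ≤ R` is a type-changing solution of the Neumann
problem for equation (1) with constant boundary flux `K > 0`: it is C¹ in the
open disk `r < R`, negative and a wave-equation solution in `r < a`, positive
and harmonic in `a < r < R`, and the outward radial derivative `∂U/∂r` equals
`K` on the boundary circle `r = R` (the radial derivative at a boundary point
`p` is the derivative of `t ↦ U(t·p/R)` at `t = R`). -/
theorem model_neumann_eq1_type_changing
    (R K a : ℝ) (hR : 0 < R) (hK : 0 < K) (ha : a ∈ Set.Ioo 0 R)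
    (U : ℝ × ℝ → ℝ)
    (hU : ∀ p : ℝ × ℝ, U p =
      if p.1 ^ 2 + p.2 ^ 2 ≤ a ^ 2 then
        K * R / 2 * ((p.1 ^ 2 + p.2 ^ 2) / a ^ 2 - 1)
      else
        K * R * Real.log (Real.sqrt (p.1 ^ 2 + p.2 ^ 2) / a)) :
    ContDiffOn ℝ 1 U {p : ℝ × ℝ | p.1 ^ 2 + p.2 ^ 2 < R ^ 2} ∧
    (∀ p : ℝ × ℝ, p.1 ^ 2 + p.2 ^ 2 < a ^ 2 →
      U p < 0 ∧ pxx U p - pyy U p = 0) ∧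
    (∀ p : ℝ × ℝ, a ^ 2 < p.1 ^ 2 + p.2 ^ 2 → p.1 ^ 2 + p.2 ^ 2 < R ^ 2 →
      0 < U p ∧ pxx U p + pyy U p = 0) ∧
    (∀ p : ℝ × ℝ, p.1 ^ 2 + p.2 ^ 2 = R ^ 2 →
      deriv (fun t : ℝ => U (t / R * p.1, t / R * p.2)) R = K) := by
  obtain ⟨ha0, haR⟩ := ha
  have ha2 : (0:ℝ) < a ^ 2 := by positivity
  have hUF : ∀ p : ℝ × ℝ, U p = Fprof K R a (p.1 ^ 2 + p.2 ^ 2) := fun p => by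
    rw [hU p]; rfl
  have hslice1 : ∀ p : ℝ × ℝ,
      (fun x => U (x, p.2)) = fun x => Fprof K R a (x ^ 2 + p.2 ^ 2) :=
    fun p => funext fun x => hUF (x, p.2)
  have hslice2 : ∀ p : ℝ × ℝ,
      (fun y => U (p.1, y)) = fun y => Fprof K R a (y ^ 2 + p.1 ^ 2) :=
    fun p => funext fun y => by rw [hUF (p.1, y)]; ring_nf
  refine ⟨?_, ?_, ?_, ?_⟩
  · -- C¹ in the disk
    have hFdiff : Differentiable ℝ (Fprof K R a) :=
      fun s => (Fprof_hasDerivAt ha0 s).differentiableAt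
    have hderivF : deriv (Fprof K R a) = fun s => K * R / (2 * max (a ^ 2) s) :=
      funext fun s => (Fprof_hasDerivAt ha0 s).deriv
    have hFC1 : ContDiff ℝ 1 (Fprof K R a) := by
      rw [contDiff_one_iff_deriv]
      refine ⟨hFdiff, ?_⟩
      rw [hderivF]
      refine continuous_const.div (by fun_prop) (fun s => ?_)
      have h := le_max_left (a ^ 2) s
      positivity
    have hN : ContDiff ℝ 1 (fun p : ℝ × ℝ => p.1 ^ 2 + p.2 ^ 2) := by fun_prop
    have : ContDiff ℝ 1 U := by
      have := hFC1.comp hN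
      convert this using 1
      funext p; exact hUF p
    exact this.contDiffOn
  · -- wave region
    intro p hp
    refine ⟨?_, ?_⟩
    · rw [hU p, if_pos hp.le]
      have h1 : (p.1 ^ 2 + p.2 ^ 2) / a ^ 2 < 1 := (div_lt_one ha2).mpr hp
      have h2 : (0:ℝ) < K * R / 2 := by positivity
      exact mul_neg_of_pos_of_neg h2 (by linarith)
    · have hx : pxx U p = K * R / a ^ 2 := by
        rw [pxx, hslice1 p]
        exact deriv2_inner ha0 _ _ hp
      have hy : pyy U p = K * R / a ^ 2 := by
        rw [pyy, hslice2 p]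
        exact deriv2_inner ha0 _ _ (by linarith)
      rw [hx, hy]; ring
  · -- harmonic region
    intro p hp1 hp2
    have hs0 : (0:ℝ) < p.1 ^ 2 + p.2 ^ 2 := ha2.trans hp1
    refine ⟨?_, ?_⟩
    · rw [hU p, if_neg (not_le.mpr hp1)]
      have h1 : a < Real.sqrt (p.1 ^ 2 + p.2 ^ 2) := (Real.lt_sqrt ha0.le).mpr hp1
      have h2 : (1:ℝ) < Real.sqrt (p.1 ^ 2 + p.2 ^ 2) / a := (one_lt_div ha0).mpr h1
      have h3 : (0:ℝ) < Real.log (Real.sqrt (p.1 ^ 2 + p.2 ^ 2) / a) := Real.log_pos h2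
      positivity
    · have hx : pxx U p = K * R * (p.2 ^ 2 - p.1 ^ 2) / (p.1 ^ 2 + p.2 ^ 2) ^ 2 := by
        rw [pxx, hslice1 p]
        exact deriv2_outer ha0 _ _ hp1
      have hy : pyy U p = K * R * (p.1 ^ 2 - p.2 ^ 2) / (p.2 ^ 2 + p.1 ^ 2) ^ 2 := by
        rw [pyy, hslice2 p]
        exact deriv2_outer ha0 _ _ (by linarith)
      rw [hx, hy]
      have : p.2 ^ 2 + p.1 ^ 2 = p.1 ^ 2 + p.2 ^ 2 := by ring
      rw [this, ← add_div]
      have : K * R * (p.2 ^ 2 - p.1 ^ 2) + K * R * (p.1 ^ 2 - p.2 ^ 2) = 0 := by ring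
      rw [this, zero_div]
  · -- Neumann boundary condition
    intro p hp
    have hev : (fun t : ℝ => U (t / R * p.1, t / R * p.2)) =ᶠ[nhds R]
        fun t => K * R * (Real.log t - Real.log a) := by
      filter_upwards [eventually_gt_nhds haR] with t ht
      have ht0 : (0:ℝ) < t := ha0.trans ht
      rw [hUF (t / R * p.1, t / R * p.2)]
      show Fprof K R a ((t / R * p.1) ^ 2 + (t / R * p.2) ^ 2) = _
      have hs : (t / R * p.1) ^ 2 + (t / R * p.2) ^ 2 = t ^ 2 := by
        have h1 : (t / R * p.1) ^ 2 + (t / R * p.2) ^ 2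
            = (t / R) ^ 2 * (p.1 ^ 2 + p.2 ^ 2) := by ring
        rw [h1, hp]; field_simp
      rw [hs]
      have ht2 : a ^ 2 ≤ t ^ 2 := by nlinarith
      rw [Fprof_eq_log ha0 ht2, Real.log_pow]
      push_cast; ring
    rw [hev.deriv_eq]
    have h1 : HasDerivAt (fun t : ℝ => K * R * (Real.log t - Real.log a)) (K * R * R⁻¹) R :=
      ((Real.hasDerivAt_log hR.ne').sub_const _).const_mul (K * R)
    rw [h1.deriv]
    field_simp
end

section
/- Let R > 0, H > 0, K > 0 and set a = R·e^{−H/(KR)}, so that 0 < a < R. Define U on the closed disk r ≤ R by U(x,y) = (H/(2 ln(a/R)))·(1 − r²/a²) for 0 ≤ r ≤ a and U(x,y) = H·ln(a/r)/ln(a/R) for a ≤ r ≤ R. Then on the boundary circle r = R one has U = H and ∂U/∂r = K; moreover a = R·e^{−H/(KR)} is the unique value in (0,R) for which this piecewise function satisfies ∂U/∂r = K at r = R. Thus the model Cauchy problem for equation (1) with data U = H > 0 and ∂U/∂r = K > 0 on r = R has exactly one type-changing solution of this form. -/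
lemma radial_deriv_aux
    (R H a : ℝ) (hR : 0 < R) (ha : a ∈ Set.Ioo (0 : ℝ) R)
    (U : ℝ → ℝ × ℝ → ℝ)
    (hU : ∀ a ∈ Set.Ioo (0 : ℝ) R, ∀ p : ℝ × ℝ, U a p =
      if p.1 ^ 2 + p.2 ^ 2 ≤ a ^ 2 then
        H / (2 * Real.log (a / R)) * (1 - (p.1 ^ 2 + p.2 ^ 2) / a ^ 2)
      else
        H * Real.log (a / Real.sqrt (p.1 ^ 2 + p.2 ^ 2)) / Real.log (a / R))
    (p : ℝ × ℝ) (hp : p.1 ^ 2 + p.2 ^ 2 = R ^ 2) :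
    deriv (fun t : ℝ => U a (t / R * p.1, t / R * p.2)) R
      = -H / (R * Real.log (a / R)) := by
  have ha0 : 0 < a := ha.1
  have heq : (fun t : ℝ => U a (t / R * p.1, t / R * p.2))
      =ᶠ[nhds R] fun t => H * (Real.log a - Real.log t) / Real.log (a / R) := by
    filter_upwards [Ioi_mem_nhds ha.2] with t ht
    have ht' : a < t := ht
    have ht0 : 0 < t := lt_trans ha0 ht'
    rw [hU a ha]
    have hsum : (t / R * p.1) ^ 2 + (t / R * p.2) ^ 2 = t ^ 2 := by
      have h1 : (t / R * p.1) ^ 2 + (t / R * p.2) ^ 2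
          = (t / R) ^ 2 * (p.1 ^ 2 + p.2 ^ 2) := by ring
      rw [h1, hp]
      field_simp
    simp only [hsum]
    rw [if_neg (by nlinarith), Real.sqrt_sq ht0.le,
      Real.log_div (ne_of_gt ha0) (ne_of_gt ht0)]
  rw [heq.deriv_eq]
  have h1 : HasDerivAt (fun t : ℝ => H * (Real.log a - Real.log t) / Real.log (a / R))
      (H * (0 - R⁻¹) / Real.log (a / R)) R := by
    exact (((hasDerivAt_const R (Real.log a)).sub
      (Real.hasDerivAt_log hR.ne')).const_mul H).div_const _
  rw [h1.deriv]
  rw [show H * (0 - R⁻¹) = -H / R by ring, div_div]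

/-- For `H > 0`, `K > 0`, consider the family (indexed by `a ∈ (0,R)`) of
type-changing solutions `U a` of the model Dirichlet problem with data `H`:
`U a = H/(2 ln(a/R))(1 - r²/a²)` for `r ≤ a`, `U a = H ln(a/r)/ln(a/R)` for
`a ≤ r ≤ R`.  Then for `a = R·e^{-H/(KR)}` (which lies in `(0,R)`) one has
`U a = H` and `∂(U a)/∂r = K` on the boundary circle `r = R`, and this value
of `a` is the unique one in `(0,R)` for which the radial derivative condition
`∂(U a)/∂r = K` holds at `r = R`.  (The radial derivative at a boundary point
`p` is the derivative of `t ↦ U a (t·p/R)` at `t = R`.) -/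
theorem model_cauchy_eq1_unique_type_changing
    (R H K : ℝ) (hR : 0 < R) (hH : 0 < H) (hK : 0 < K)
    (U : ℝ → ℝ × ℝ → ℝ)
    (hU : ∀ a ∈ Set.Ioo (0 : ℝ) R, ∀ p : ℝ × ℝ, U a p =
      if p.1 ^ 2 + p.2 ^ 2 ≤ a ^ 2 then
        H / (2 * Real.log (a / R)) * (1 - (p.1 ^ 2 + p.2 ^ 2) / a ^ 2)
      else
        H * Real.log (a / Real.sqrt (p.1 ^ 2 + p.2 ^ 2)) / Real.log (a / R)) :
    R * Real.exp (-(H / (K * R))) ∈ Set.Ioo (0 : ℝ) R ∧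
    (∀ p : ℝ × ℝ, p.1 ^ 2 + p.2 ^ 2 = R ^ 2 →
      U (R * Real.exp (-(H / (K * R)))) p = H ∧
      deriv (fun t : ℝ =>
        U (R * Real.exp (-(H / (K * R)))) (t / R * p.1, t / R * p.2)) R = K) ∧
    (∀ a ∈ Set.Ioo (0 : ℝ) R,
      (∀ p : ℝ × ℝ, p.1 ^ 2 + p.2 ^ 2 = R ^ 2 →
        deriv (fun t : ℝ => U a (t / R * p.1, t / R * p.2)) R = K) →
      a = R * Real.exp (-(H / (K * R)))) := by
  set a₀ := R * Real.exp (-(H / (K * R))) with ha₀def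
  have hexp : Real.exp (-(H / (K * R))) < 1 := by
    rw [Real.exp_lt_one_iff]
    have : 0 < H / (K * R) := by positivity
    linarith
  have ha₀ : a₀ ∈ Set.Ioo (0 : ℝ) R := by
    constructor
    · positivity
    · have := mul_lt_mul_of_pos_left hexp hR
      simpa using this
  have hlog : Real.log (a₀ / R) = -(H / (K * R)) := by
    rw [ha₀def, mul_comm, mul_div_assoc, div_self hR.ne', mul_one, Real.log_exp]
  have hlogne : Real.log (a₀ / R) ≠ 0 := by
    rw [hlog]
    have : 0 < H / (K * R) := by positivity
    linarith
  refine ⟨ha₀, ?_, ?_⟩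
  · intro p hp
    constructor
    · rw [hU a₀ ha₀ p, hp, if_neg (by nlinarith [ha₀.1, ha₀.2]),
        Real.sqrt_sq hR.le, div_eq_iff hlogne]
    · rw [radial_deriv_aux R H a₀ hR ha₀ U hU p hp, hlog]
      field_simp
  · intro a ha hd
    have hp : ((R : ℝ), (0 : ℝ)).1 ^ 2 + ((R : ℝ), (0 : ℝ)).2 ^ 2 = R ^ 2 := by
      simp
    have h := hd (R, 0) hp
    rw [radial_deriv_aux R H a hR ha U hU (R, 0) hp] at h
    have hL : Real.log (a / R) < 0 := by
      apply Real.log_neg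
      · exact div_pos ha.1 hR
      · rw [div_lt_one hR]; exact ha.2
    have hLval : Real.log (a / R) = -(H / (K * R)) := by
      have hRL : R * Real.log (a / R) ≠ 0 := by
        intro h0
        rcases mul_eq_zero.mp h0 with h1 | h1
        · exact hR.ne' h1
        · exact hL.ne h1
      field_simp at h
      field_simp
      rw [neg_div', div_eq_iff hL.ne] at h
      nlinarith [h]
    have : a / R = Real.exp (-(H / (K * R))) := by
      rw [← hLval, Real.exp_log (div_pos ha.1 hR)]
    rw [ha₀def, ← this]
    field_simp
end

section
/- Let R > 0, H, K ∈ ℝ and a ∈ (0,R). Define U on the closed disk r ≤ R by U(x,y) = (KR/(2a²))·(r² − a²) + KR·ln(a/R) + H for 0 ≤ r ≤ a, and U(x,y) = KR·ln(r/R) + H for a ≤ r ≤ R. Then U is continuously differentiable on the open disk r < R, satisfies the wave equation ∂²U/∂x² − ∂²U/∂y² = 0 in r < a and the Laplace equation ∂²U/∂x² + ∂²U/∂y² = 0 in a < r < R, and on the boundary circle r = R it satisfies U = H and ∂U/∂r = K. Hence the model Cauchy problem for equation (2) has, for every a ∈ (0,R), a solution of this form that changes the type of the equation. -/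
private lemma aux_quad (c b d x : ℝ) :
    deriv (deriv (fun t : ℝ => c * (t ^ 2 + b) + d)) x = 2 * c := by
  have h1 : deriv (fun t : ℝ => c * (t ^ 2 + b) + d) = fun t => c * (2 * t) := by
    funext t
    have h : HasDerivAt (fun t : ℝ => c * (t ^ 2 + b) + d) (c * (2 * t)) t := by
      simpa using (((hasDerivAt_pow 2 t).add_const b).const_mul c).add_const d
    exact h.deriv
  rw [h1]
  have h : HasDerivAt (fun t : ℝ => c * (2 * t)) (c * 2) x := by
    simpa [mul_assoc] using (hasDerivAt_id x).const_mul (c * 2)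
  rw [h.deriv]; ring

private lemma aux_log (c d y x : ℝ) (h : 0 < x ^ 2 + y ^ 2) :
    deriv (deriv (fun t : ℝ => c * Real.log (t ^ 2 + y ^ 2) + d)) x
      = 2 * c * (y ^ 2 - x ^ 2) / (x ^ 2 + y ^ 2) ^ 2 := by
  have hev : ∀ᶠ t in nhds x, 0 < t ^ 2 + y ^ 2 := by
    have hopen : IsOpen {t : ℝ | 0 < t ^ 2 + y ^ 2} :=
      isOpen_lt continuous_const (by continuity)
    exact hopen.mem_nhds h
  have h1 : deriv (fun t : ℝ => c * Real.log (t ^ 2 + y ^ 2) + d)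
      =ᶠ[nhds x] fun t => c * (2 * t) / (t ^ 2 + y ^ 2) := by
    filter_upwards [hev] with t ht
    have hb : HasDerivAt (fun t : ℝ => t ^ 2 + y ^ 2) (2 * t) t := by
      simpa using (hasDerivAt_pow 2 t).add_const (y ^ 2)
    have hD := ((hb.log (ne_of_gt ht)).const_mul c).add_const d
    rw [hD.deriv]; ring
  rw [h1.deriv_eq]
  have hb : HasDerivAt (fun t : ℝ => t ^ 2 + y ^ 2) (2 * x) x := by
    simpa using (hasDerivAt_pow 2 x).add_const (y ^ 2)
  have hn : HasDerivAt (fun t : ℝ => c * (2 * t)) (c * 2) x := by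
    simpa [mul_assoc] using (hasDerivAt_id x).const_mul (c * 2)
  have hD : HasDerivAt (fun t : ℝ => c * (2 * t) / (t ^ 2 + y ^ 2)) _ x := hn.div hb (ne_of_gt h)
  rw [hD.deriv]
  field_simp
  ring


set_option maxHeartbeats 1000000 in
/-- For every `a ∈ (0,R)`, the piecewise function
`U = (KR/(2a²))(r² - a²) + KR ln(a/R) + H` for `r ≤ a`,
`U = KR ln(r/R) + H` for `a ≤ r ≤ R` is a type-changing solution of the model
Cauchy problem for equation (2): it is C¹ in the open disk `r < R`, satisfies
the wave equation in `r < a` and the Laplace equation in `a < r < R`, and on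
the boundary circle `r = R` satisfies `U = H` and `∂U/∂r = K`.  (The radial
derivative at a boundary point `p` is the derivative of `t ↦ U(t·p/R)` at
`t = R`.) -/
theorem model_cauchy_eq2_type_changing
    (R H K a : ℝ) (hR : 0 < R) (ha : a ∈ Set.Ioo 0 R)
    (U : ℝ × ℝ → ℝ)
    (hU : ∀ p : ℝ × ℝ, U p =
      if p.1 ^ 2 + p.2 ^ 2 ≤ a ^ 2 then
        K * R / (2 * a ^ 2) * (p.1 ^ 2 + p.2 ^ 2 - a ^ 2)
          + K * R * Real.log (a / R) + H
      else
        K * R * Real.log (Real.sqrt (p.1 ^ 2 + p.2 ^ 2) / R) + H) :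
    ContDiffOn ℝ 1 U {p : ℝ × ℝ | p.1 ^ 2 + p.2 ^ 2 < R ^ 2} ∧
    (∀ p : ℝ × ℝ, p.1 ^ 2 + p.2 ^ 2 < a ^ 2 → pxx U p - pyy U p = 0) ∧
    (∀ p : ℝ × ℝ, a ^ 2 < p.1 ^ 2 + p.2 ^ 2 → p.1 ^ 2 + p.2 ^ 2 < R ^ 2 →
      pxx U p + pyy U p = 0) ∧
    (∀ p : ℝ × ℝ, p.1 ^ 2 + p.2 ^ 2 = R ^ 2 →
      U p = H ∧
      deriv (fun t : ℝ => U (t / R * p.1, t / R * p.2)) R = K) := by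
  obtain ⟨ha0, haR⟩ := ha
  have ha2 : (0:ℝ) < a ^ 2 := by positivity
  set c0 : ℝ := K * R / (2 * a ^ 2) with hc0
  set C1 : ℝ := K * R * Real.log (a / R) + H with hC1
  set C2 : ℝ := H - K * R * Real.log R with hC2
  set φ : ℝ → ℝ := fun s =>
    if s ≤ a ^ 2 then c0 * (s - a ^ 2) + C1 else K * R / 2 * Real.log s + C2 with hφ
  have hlog : ∀ s : ℝ, 0 < s →
      K * R * Real.log (Real.sqrt s / R) + H = K * R / 2 * Real.log s + C2 := by
    intro s hs
    rw [Real.log_div (by positivity) (ne_of_gt hR), Real.log_sqrt hs.le, hC2]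
    ring
  -- Part 1: C¹ regularity
  have hUφ : ∀ p : ℝ × ℝ, U p = φ (p.1 ^ 2 + p.2 ^ 2) := by
    intro p
    rw [hU p, hφ]
    by_cases h : p.1 ^ 2 + p.2 ^ 2 ≤ a ^ 2
    · simp only [if_pos h, hc0, hC1]; ring
    · push_neg at h
      simp only [if_neg (not_le.mpr h)]
      exact hlog _ (lt_trans ha2 h)
  set ψ : ℝ → ℝ := fun s => K * R / (2 * max s (a ^ 2)) with hψ
  have hmaxpos : ∀ s : ℝ, (0:ℝ) < 2 * max s (a ^ 2) := fun s => by
    have := lt_of_lt_of_le ha2 (le_max_right s (a ^ 2)); linarith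
  have hψc : Continuous ψ := by
    apply Continuous.div continuous_const (by continuity)
    exact fun s => ne_of_gt (hmaxpos s)
  have hglue : K * R / 2 * Real.log (a ^ 2) + C2 = C1 := by
    rw [Real.log_pow, hC2, hC1, Real.log_div (ne_of_gt ha0) (ne_of_gt hR)]
    push_cast; ring
  have hderiv : ∀ s : ℝ, HasDerivAt φ (ψ s) s := by
    intro s
    rcases lt_trichotomy s (a ^ 2) with hs | hs | hs
    · -- s < a²
      have hb : HasDerivAt (fun u : ℝ => c0 * (u - a ^ 2) + C1) c0 s := by
        simpa using (((hasDerivAt_id s).sub_const (a ^ 2)).const_mul c0).add_const C1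
      have heq : φ =ᶠ[nhds s] fun u => c0 * (u - a ^ 2) + C1 := by
        filter_upwards [eventually_lt_nhds hs] with u hu
        rw [hφ]; simp [le_of_lt hu]
      have hDD : HasDerivAt φ c0 s := hb.congr_of_eventuallyEq heq
      have : ψ s = c0 := by
        simp only [hψ, hc0]; rw [max_eq_right hs.le]
      rw [this]; exact hDD
    · -- s = a²
      subst hs
      have h1 : HasDerivWithinAt φ c0 (Set.Iic (a ^ 2)) (a ^ 2) := by
        have hb : HasDerivAt (fun u : ℝ => c0 * (u - a ^ 2) + C1) c0 (a ^ 2) := by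
          simpa using (((hasDerivAt_id (a^2)).sub_const (a ^ 2)).const_mul c0).add_const C1
        refine hb.hasDerivWithinAt.congr (fun y hy => ?_) ?_
        · simp only [hφ]; rw [if_pos (Set.mem_Iic.mp hy)]
        · simp only [hφ]; rw [if_pos le_rfl]
      have h2 : HasDerivWithinAt φ c0 (Set.Ici (a ^ 2)) (a ^ 2) := by
        have hb : HasDerivAt (fun u : ℝ => K * R / 2 * Real.log u + C2)
            (K * R / 2 * (a ^ 2)⁻¹) (a ^ 2) := by
          simpa using ((Real.hasDerivAt_log (ne_of_gt ha2)).const_mul (K * R / 2)).add_const C2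
        have hb' : HasDerivAt (fun u : ℝ => K * R / 2 * Real.log u + C2) c0 (a ^ 2) := by
          convert hb using 1; rw [hc0]; field_simp
        refine hb'.hasDerivWithinAt.congr (fun y hy => ?_) ?_
        · simp only [hφ]
          rcases eq_or_lt_of_le (Set.mem_Ici.mp hy) with h | h
          · rw [if_pos (le_of_eq h.symm), ← h, ← hglue]; ring
          · rw [if_neg (not_le.mpr h)]
        · simp only [hφ]; rw [if_pos le_rfl, ← hglue]; ring
      have hu := (h1.union h2)
      rw [Set.Iic_union_Ici] at hu
      have h3 := hu.hasDerivAt (by simp)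
      have : ψ (a ^ 2) = c0 := by
        simp only [hψ, hc0]; rw [max_self]
      rw [this]; exact h3
    · -- s > a²
      have hs0 : (0:ℝ) < s := lt_trans ha2 hs
      have hb : HasDerivAt (fun u : ℝ => K * R / 2 * Real.log u + C2)
          (K * R / 2 * s⁻¹) s := by
        simpa using ((Real.hasDerivAt_log (ne_of_gt hs0)).const_mul (K * R / 2)).add_const C2
      have heq : φ =ᶠ[nhds s] fun u => K * R / 2 * Real.log u + C2 := by
        filter_upwards [eventually_gt_nhds hs] with u hu
        rw [hφ]; simp [not_le.mpr hu]
      have hDD := hb.congr_of_eventuallyEq heq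
      have : ψ s = K * R / 2 * s⁻¹ := by
        simp only [hψ]; rw [max_eq_left hs.le]; field_simp
      rw [this]; exact hDD
  have hUc1 : ContDiff ℝ 1 U := by
    have hφc : ContDiff ℝ 1 φ := by
      rw [contDiff_one_iff_deriv]
      refine ⟨fun s => (hderiv s).differentiableAt, ?_⟩
      have : deriv φ = ψ := funext fun s => (hderiv s).deriv
      rw [this]; exact hψc
    have hq : ContDiff ℝ 1 (fun p : ℝ × ℝ => p.1 ^ 2 + p.2 ^ 2) := by
      exact ContDiff.add (contDiff_fst.pow 2) (contDiff_snd.pow 2)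
    have : U = fun p : ℝ × ℝ => φ (p.1 ^ 2 + p.2 ^ 2) := funext hUφ
    rw [this]
    exact hφc.comp hq
  refine ⟨hUc1.contDiffOn, ?_, ?_, ?_⟩
  · -- wave equation
    intro p hp
    have hx : (fun x => U (x, p.2)) =ᶠ[nhds p.1]
        fun x => c0 * (x ^ 2 + (p.2 ^ 2 - a ^ 2)) + C1 := by
      have hopen : IsOpen {x : ℝ | x ^ 2 + p.2 ^ 2 < a ^ 2} :=
        isOpen_lt (by continuity) continuous_const
      filter_upwards [hopen.mem_nhds hp] with x hx
      rw [hU (x, p.2)]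
      simp only [if_pos (le_of_lt hx)]
      rw [hc0, hC1]; ring
    have hy : (fun y => U (p.1, y)) =ᶠ[nhds p.2]
        fun y => c0 * (y ^ 2 + (p.1 ^ 2 - a ^ 2)) + C1 := by
      have hopen : IsOpen {y : ℝ | p.1 ^ 2 + y ^ 2 < a ^ 2} :=
        isOpen_lt (by continuity) continuous_const
      filter_upwards [hopen.mem_nhds hp] with y hy
      rw [hU (p.1, y)]
      simp only [if_pos (le_of_lt hy)]
      rw [hc0, hC1]; ring
    have e1 : pxx U p = 2 * c0 := by
      rw [pxx, (hx.deriv).deriv_eq, aux_quad]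
    have e2 : pyy U p = 2 * c0 := by
      rw [pyy, (hy.deriv).deriv_eq, aux_quad]
    rw [e1, e2]; ring
  · -- Laplace equation
    intro p hp hpR
    have hs0 : (0:ℝ) < p.1 ^ 2 + p.2 ^ 2 := lt_trans ha2 hp
    have hx : (fun x => U (x, p.2)) =ᶠ[nhds p.1]
        fun x => K * R / 2 * Real.log (x ^ 2 + p.2 ^ 2) + C2 := by
      have hopen : IsOpen {x : ℝ | a ^ 2 < x ^ 2 + p.2 ^ 2} :=
        isOpen_lt continuous_const (by continuity)
      filter_upwards [hopen.mem_nhds hp] with x hx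
      rw [hU (x, p.2)]
      simp only [if_neg (not_le.mpr hx)]
      exact hlog _ (lt_trans ha2 hx)
    have hy : (fun y => U (p.1, y)) =ᶠ[nhds p.2]
        fun y => K * R / 2 * Real.log (y ^ 2 + p.1 ^ 2) + C2 := by
      have hopen : IsOpen {y : ℝ | a ^ 2 < p.1 ^ 2 + y ^ 2} :=
        isOpen_lt continuous_const (by continuity)
      filter_upwards [hopen.mem_nhds hp] with y hy
      rw [hU (p.1, y)]
      simp only [if_neg (not_le.mpr hy)]
      rw [add_comm (y ^ 2)]
      exact hlog _ (lt_trans ha2 hy)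
    have e1 : pxx U p = 2 * (K * R / 2) * (p.2 ^ 2 - p.1 ^ 2) / (p.1 ^ 2 + p.2 ^ 2) ^ 2 := by
      rw [pxx, (hx.deriv).deriv_eq, aux_log _ _ _ _ hs0]
    have e2 : pyy U p = 2 * (K * R / 2) * (p.1 ^ 2 - p.2 ^ 2) / (p.2 ^ 2 + p.1 ^ 2) ^ 2 := by
      rw [pyy, (hy.deriv).deriv_eq, aux_log _ _ _ _ (by rw [add_comm]; exact hs0)]
    rw [e1, e2, add_comm (p.2 ^ 2) (p.1 ^ 2)]; ring
  · -- boundary conditions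
    intro p hp
    have haR2 : a ^ 2 < R ^ 2 := by nlinarith
    constructor
    · rw [hU p, hp, if_neg (not_le.mpr haR2), Real.sqrt_sq hR.le, div_self (ne_of_gt hR),
        Real.log_one]
      ring
    · have heq : (fun t : ℝ => U (t / R * p.1, t / R * p.2)) =ᶠ[nhds R]
          fun t => K * R * (Real.log t - Real.log R) + H := by
        filter_upwards [eventually_gt_nhds haR] with t ht
        have ht0 : 0 < t := lt_trans ha0 ht
        rw [hU (t / R * p.1, t / R * p.2)]
        have harg : (t / R * p.1) ^ 2 + (t / R * p.2) ^ 2 = t ^ 2 := by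
          have : (t / R * p.1) ^ 2 + (t / R * p.2) ^ 2
              = (t / R) ^ 2 * (p.1 ^ 2 + p.2 ^ 2) := by ring
          rw [this, hp]; field_simp
        simp only [harg]
        have ht2 : a ^ 2 < t ^ 2 := by nlinarith
        rw [if_neg (not_le.mpr ht2), Real.sqrt_sq ht0.le,
          Real.log_div (ne_of_gt ht0) (ne_of_gt hR)]
      rw [heq.deriv_eq]
      have hD : HasDerivAt (fun t : ℝ => K * R * (Real.log t - Real.log R) + H)
          (K * R * R⁻¹) R := by
        simpa using (((Real.hasDerivAt_log (ne_of_gt hR)).sub_const (Real.log R)).const_mul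
          (K * R)).add_const H
      rw [hD.deriv]
      field_simp
end

section
/- Let C > 0. Define U on the closed upper half-plane y ≥ 0 by U(x,y) = C·e^x·sin y for 0 ≤ y ≤ π and U(x,y) = C·e^x·sinh(π − y) for y ≥ π. Then U is continuously differentiable on the open half-plane y > 0, U(x,0) = 0 for all x, U > 0 in the strip 0 < y < π where it satisfies the Laplace equation ∂²U/∂x² + ∂²U/∂y² = 0, U = 0 on the line y = π, and U < 0 in the half-plane y > π where it satisfies the wave equation ∂²U/∂x² − ∂²U/∂y² = 0. Hence for every C > 0 this is a type-changing solution of equation (1) in the upper half-plane with zero Dirichlet data on y = 0. -/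
private lemma hasDerivAt_sps (y : ℝ) :
    HasDerivAt (fun y => Real.sinh (Real.pi - y)) (-Real.cosh (Real.pi - y)) y := by
  have h1 : HasDerivAt (fun y : ℝ => Real.pi - y) (-1) y :=
    (hasDerivAt_id y).const_sub Real.pi
  simpa [Function.comp_def] using (Real.hasDerivAt_sinh (Real.pi - y)).comp y h1

private lemma hasDerivAt_cps (y : ℝ) :
    HasDerivAt (fun y => Real.cosh (Real.pi - y)) (-Real.sinh (Real.pi - y)) y := by
  have h1 : HasDerivAt (fun y : ℝ => Real.pi - y) (-1) y :=
    (hasDerivAt_id y).const_sub Real.pi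
  simpa [Function.comp_def] using (Real.hasDerivAt_cosh (Real.pi - y)).comp y h1

private lemma deriv_kexp (k : ℝ) :
    deriv (fun x => k * Real.exp x) = fun x => k * Real.exp x := by
  funext x; rw [deriv_const_mul_field]; simp

private lemma deriv_ksin (k : ℝ) :
    deriv (fun y => k * Real.sin y) = fun y => k * Real.cos y := by
  funext y; rw [deriv_const_mul_field]; simp

private lemma deriv_kcos (k : ℝ) :
    deriv (fun y => k * Real.cos y) = fun y => -(k * Real.sin y) := by
  funext y; rw [deriv_const_mul_field]; simp [Real.deriv_cos]

private lemma deriv_ksinh (k : ℝ) :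
    deriv (fun y => k * Real.sinh (Real.pi - y)) =
      fun y => -(k * Real.cosh (Real.pi - y)) := by
  funext y; rw [deriv_const_mul_field, (hasDerivAt_sps y).deriv]; ring

private lemma deriv_nkcosh (k : ℝ) :
    deriv (fun y => -(k * Real.cosh (Real.pi - y))) =
      fun y => k * Real.sinh (Real.pi - y) := by
  funext y
  have h : HasDerivAt (fun y => -(k * Real.cosh (Real.pi - y)))
      (k * Real.sinh (Real.pi - y)) y := by
    simpa [mul_comm, neg_mul, Pi.neg_def] using (((hasDerivAt_cps y).const_mul k).neg)
  exact h.deriv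

noncomputable def gfun : ℝ → ℝ :=
  fun y => if y ≤ Real.pi then Real.sin y else Real.sinh (Real.pi - y)

noncomputable def gfun' : ℝ → ℝ :=
  fun y => if y ≤ Real.pi then Real.cos y else -Real.cosh (Real.pi - y)

lemma gfun_hasDerivAt (y : ℝ) : HasDerivAt gfun (gfun' y) y := by
  rcases lt_trichotomy y Real.pi with h | h | h
  · have hev : gfun =ᶠ[nhds y] Real.sin := by
      filter_upwards [Iio_mem_nhds h] with z hz
      simp only [gfun, if_pos (Set.mem_Iio.mp hz).le]
    rw [gfun', if_pos h.le]
    exact (Real.hasDerivAt_sin y).congr_of_eventuallyEq hev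
  · subst h
    have h1 : HasDerivWithinAt gfun (-1) (Set.Iic Real.pi) Real.pi := by
      have h := (Real.hasDerivAt_sin Real.pi).hasDerivWithinAt.congr (s := Set.Iic Real.pi)
        (f₁ := gfun) (fun z hz => by simp only [gfun, if_pos (Set.mem_Iic.mp hz)]) (by simp [gfun])
      simpa using h
    have h2 : HasDerivWithinAt gfun (-1) (Set.Ici Real.pi) Real.pi := by
      have h := (hasDerivAt_sps Real.pi).hasDerivWithinAt.congr (s := Set.Ici Real.pi) (f₁ := gfun)
        (fun z hz => by
          rcases eq_or_lt_of_le (Set.mem_Ici.mp hz) with h | h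
          · simp [gfun, ← h]
          · simp [gfun, not_le.mpr h])
        (by simp [gfun])
      simpa using h
    have := h1.union h2
    rw [Set.Iic_union_Ici, hasDerivWithinAt_univ] at this
    have hval : gfun' Real.pi = -1 := by simp [gfun']
    rw [hval]; exact this
  · have hev : gfun =ᶠ[nhds y] fun z => Real.sinh (Real.pi - z) := by
      filter_upwards [Ioi_mem_nhds h] with z hz
      simp [gfun, not_le.mpr (Set.mem_Ioi.mp hz)]
    rw [gfun', if_neg (not_le.mpr h)]
    exact (hasDerivAt_sps y).congr_of_eventuallyEq hev

lemma gfun_contDiff : ContDiff ℝ 1 gfun := by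
  rw [contDiff_one_iff_deriv]
  constructor
  · exact fun y => (gfun_hasDerivAt y).differentiableAt
  · have : deriv gfun = gfun' := funext fun y => (gfun_hasDerivAt y).deriv
    rw [this]
    exact Continuous.if_le Real.continuous_cos
      (Real.continuous_cosh.comp (continuous_const.sub continuous_id)).neg
      continuous_id continuous_const (by intro x hx; simp [hx])

/-- For every `C > 0`, the function `U = C eˣ sin y` for `0 ≤ y ≤ π`,
`U = C eˣ sinh(π - y)` for `y ≥ π` is a type-changing solution of equation (1)
on the upper half-plane with zero Dirichlet data on `y = 0`: it is C¹ in the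
open half-plane `y > 0`, vanishes on `y = 0`, is positive and harmonic in the
strip `0 < y < π`, vanishes on `y = π`, and is negative and a wave-equation
solution in the half-plane `y > π`. -/
theorem model_dirichlet_half_plane_eq1
    (C : ℝ) (hC : 0 < C)
    (U : ℝ × ℝ → ℝ)
    (hU : ∀ p : ℝ × ℝ, U p =
      if p.2 ≤ Real.pi then C * Real.exp p.1 * Real.sin p.2
      else C * Real.exp p.1 * Real.sinh (Real.pi - p.2)) :
    ContDiffOn ℝ 1 U {p : ℝ × ℝ | 0 < p.2} ∧
    (∀ x : ℝ, U (x, 0) = 0) ∧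
    (∀ p : ℝ × ℝ, 0 < p.2 → p.2 < Real.pi →
      0 < U p ∧ pxx U p + pyy U p = 0) ∧
    (∀ p : ℝ × ℝ, p.2 = Real.pi → U p = 0) ∧
    (∀ p : ℝ × ℝ, Real.pi < p.2 →
      U p < 0 ∧ pxx U p - pyy U p = 0) := by
  have hUeq : U = fun p => C * Real.exp p.1 * gfun p.2 := by
    funext p; rw [hU]
    by_cases h : p.2 ≤ Real.pi <;> simp [gfun, h]
  refine ⟨?_, ?_, ?_, ?_, ?_⟩
  · rw [hUeq]
    exact (((contDiff_const.mul (Real.contDiff_exp.comp contDiff_fst)).mul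
      (gfun_contDiff.comp contDiff_snd))).contDiffOn
  · intro x; rw [hU]; simp [Real.pi_pos.le]
  · intro p hp hp'
    constructor
    · rw [hU, if_pos hp'.le]
      exact mul_pos (mul_pos hC (Real.exp_pos _)) (Real.sin_pos_of_pos_of_lt_pi hp hp')
    · have hx : (fun x => U (x, p.2)) = fun x => (C * Real.sin p.2) * Real.exp x := by
        funext x; rw [hU, if_pos hp'.le]; ring
      have hxx : pxx U p = C * Real.sin p.2 * Real.exp p.1 := by
        rw [pxx, hx, deriv_kexp, deriv_kexp]
      have hy : (fun y => U (p.1, y)) =ᶠ[nhds p.2]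
          fun y => (C * Real.exp p.1) * Real.sin y := by
        filter_upwards [Iio_mem_nhds hp'] with z hz
        rw [hU, if_pos (le_of_lt hz)]
      have hyy : pyy U p = -(C * Real.exp p.1 * Real.sin p.2) := by
        rw [pyy, hy.deriv.deriv_eq, deriv_ksin, deriv_kcos]
      rw [hxx, hyy]; ring
  · intro p hp; rw [hU, if_pos hp.le, hp]; simp
  · intro p hp
    constructor
    · rw [hU, if_neg (not_le.mpr hp)]
      have : Real.sinh (Real.pi - p.2) < 0 := Real.sinh_neg_iff.mpr (by linarith)
      exact mul_neg_of_pos_of_neg (mul_pos hC (Real.exp_pos _)) this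
    · have hx : (fun x => U (x, p.2)) =
          fun x => (C * Real.sinh (Real.pi - p.2)) * Real.exp x := by
        funext x; rw [hU, if_neg (not_le.mpr hp)]; ring
      have hxx : pxx U p = C * Real.sinh (Real.pi - p.2) * Real.exp p.1 := by
        rw [pxx, hx, deriv_kexp, deriv_kexp]
      have hy : (fun y => U (p.1, y)) =ᶠ[nhds p.2]
          fun y => (C * Real.exp p.1) * Real.sinh (Real.pi - y) := by
        filter_upwards [Ioi_mem_nhds hp] with z hz
        rw [hU, if_neg (not_le.mpr hz)]
      have hyy : pyy U p = C * Real.exp p.1 * Real.sinh (Real.pi - p.2) := by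
        rw [pyy, hy.deriv.deriv_eq, deriv_ksinh, deriv_nkcosh]
      rw [hxx, hyy]; ring
end

section
/- Let a > 0 and C > 0. Define U on the whole plane ℝ² by U(x,y) = C(r² − a²) for 0 ≤ r ≤ a and U(x,y) = 2Ca²·ln(r/a) for r ≥ a, where r² = x² + y². Then U is continuously differentiable on ℝ², U < 0 in the open disk r < a where it satisfies the wave equation ∂²U/∂x² − ∂²U/∂y² = 0, U = 0 on the circle r = a, and U > 0 for r > a where it satisfies the Laplace equation ∂²U/∂x² + ∂²U/∂y² = 0. Hence U is a solution of equation (1) on the whole plane that changes the type of the equation. -/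
open Real Filter Topology

lemma hq1 (C c x : ℝ) : HasDerivAt (fun t => C * (t^2 + c)) (C * (2*x)) x := by
  have h := ((hasDerivAt_pow 2 x).add_const c).const_mul C
  simpa using h

lemma hq2 (C x : ℝ) : HasDerivAt (fun t => C * (2*t)) (C * 2) x := by
  have e : (fun t : ℝ => C*(2*t)) = fun t => (C*2)*t := by funext t; ring
  have h := (hasDerivAt_id x).const_mul (C*2)
  rw [e]; simpa using h

lemma dd_quad (C c x : ℝ) : deriv (deriv (fun t => C * (t^2 + c))) x = 2 * C := by
  have h1 : deriv (fun t => C*(t^2+c)) = fun t => C*(2*t) := funext fun t => (hq1 C c t).deriv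
  rw [h1, (hq2 C x).deriv]; ring

lemma hd1 (K c b x : ℝ) (h : 0 < x^2 + b) :
    HasDerivAt (fun t => K * (Real.log (t^2 + b) - c)) (K * (2 * x / (x^2 + b))) x := by
  have h1 : HasDerivAt (fun t : ℝ => t^2 + b) (2*x) x := by
    simpa using (hasDerivAt_pow 2 x).add_const b
  have h2 := (Real.hasDerivAt_log h.ne').comp x h1
  have h3 := (h2.sub_const c).const_mul K
  exact h3.congr_deriv (by ring)

lemma hd2 (K b x : ℝ) (h : x^2 + b ≠ 0) :
    HasDerivAt (fun t => K * (2 * t / (t^2 + b)))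
      (K * (2/(x^2+b) - 2*x*(2*x)/(x^2+b)^2)) x := by
  have h1 : HasDerivAt (fun t : ℝ => t^2 + b) (2*x) x := by
    simpa using (hasDerivAt_pow 2 x).add_const b
  have hinv := h1.inv h
  have hmul := (hasDerivAt_id x).mul hinv
  have h' := hmul.const_mul (K*2)
  have e : (fun t : ℝ => K * (2*t/(t^2+b))) = fun t => (K*2) * (id t * ((t^2+b))⁻¹) := by
    funext t; simp [id]; ring
  rw [e]
  exact h'.congr_deriv (by simp only [id, Pi.inv_apply]; field_simp; ring)

lemma dd_log (K c b x : ℝ) (h : 0 < x^2 + b) :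
    deriv (deriv (fun t => K * (Real.log (t^2+b) - c))) x
      = K * (2/(x^2+b) - 2*x*(2*x)/(x^2+b)^2) := by
  have hev : ∀ᶠ t in 𝓝 x, 0 < t^2 + b := by
    have hc : Continuous fun t : ℝ => t^2 + b := by continuity
    exact ContinuousAt.eventually_lt continuousAt_const hc.continuousAt h
  have h1 : deriv (fun t => K*(Real.log (t^2+b)-c)) =ᶠ[𝓝 x] fun t => K*(2*t/(t^2+b)) :=
    hev.mono fun t ht => (hd1 K c b t ht).deriv
  rw [h1.deriv_eq, (hd2 K b x h.ne').deriv]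

lemma log_form (a : ℝ) (ha : 0 < a) (s : ℝ) (hs : 0 < s) :
    2 * Real.log (Real.sqrt s / a) = Real.log s - Real.log (a^2) := by
  rw [Real.log_div (Real.sqrt_ne_zero'.2 hs) ha.ne', Real.log_sqrt hs.le, Real.log_pow]
  push_cast; ring

lemma phi_key (a C : ℝ) (ha : 0 < a) (t : ℝ) :
    HasDerivAt (fun t : ℝ => if t ≤ a^2 then C*(t - a^2) else C*a^2*(Real.log t - Real.log (a^2)))
      (C * a^2 / max t (a^2)) t := by
  have ha2 : (0:ℝ) < a^2 := by positivity
  set φ : ℝ → ℝ := fun t => if t ≤ a^2 then C*(t - a^2) else C*a^2*(Real.log t - Real.log (a^2)) with hφ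
  have hlin : ∀ u, HasDerivAt (fun u : ℝ => C*(u - a^2)) C u := fun u => by
    simpa using ((hasDerivAt_id u).sub_const (a^2)).const_mul C
  have hlog : ∀ u : ℝ, 0 < u →
      HasDerivAt (fun u : ℝ => C*a^2*(Real.log u - Real.log (a^2))) (C*a^2 * u⁻¹) u := fun u hu =>
    ((Real.hasDerivAt_log hu.ne').sub_const _).const_mul (C*a^2)
  rcases lt_trichotomy t (a^2) with h | h | h
  · have hev : φ =ᶠ[nhds t] fun u => C*(u - a^2) := by
      filter_upwards [Filter.Tendsto.eventually_lt_const h (Filter.tendsto_id)] with u hu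
      simp only [hφ]; exact if_pos (le_of_lt hu)
    have := (hlin t).congr_of_eventuallyEq hev
    exact this.congr_deriv (by rw [max_eq_right h.le]; field_simp)
  · subst h
    have hL : HasDerivWithinAt φ C (Set.Iic (a^2)) (a^2) := by
      refine ((hlin (a^2)).hasDerivWithinAt).congr (fun u hu => ?_) ?_
      · simp [hφ, Set.mem_Iic.1 hu]
      · simp [hφ]
    have hR : HasDerivWithinAt φ C (Set.Ici (a^2)) (a^2) := by
      have h0 := hlog (a^2) ha2
      have hv : C*a^2 * (a^2)⁻¹ = C := by field_simp
      rw [hv] at h0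
      refine (h0.hasDerivWithinAt).congr (fun u hu => ?_) ?_
      · rcases eq_or_lt_of_le (Set.mem_Ici.1 hu) with h | h
        · simp [hφ, ← h]
        · simp [hφ, not_le.2 h]
      · simp [hφ]
    have := hL.union hR
    rw [Set.Iic_union_Ici, hasDerivWithinAt_univ] at this
    exact this.congr_deriv (by rw [max_self]; field_simp)
  · have hev : φ =ᶠ[nhds t] fun u => C*a^2*(Real.log u - Real.log (a^2)) := by
      filter_upwards [Filter.Tendsto.eventually_const_lt h (Filter.tendsto_id)] with u hu
      simp only [hφ]; exact if_neg (not_le.2 hu)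
    have := (hlog t (ha2.trans h)).congr_of_eventuallyEq hev
    exact this.congr_deriv (by rw [max_eq_left h.le]; field_simp)

lemma phi_cd (a C : ℝ) (ha : 0 < a) :
    ContDiff ℝ 1 (fun t : ℝ => if t ≤ a^2 then C*(t - a^2) else C*a^2*(Real.log t - Real.log (a^2))) := by
  have ha2 : (0:ℝ) < a^2 := by positivity
  rw [contDiff_one_iff_deriv]
  refine ⟨fun t => (phi_key a C ha t).differentiableAt, ?_⟩
  have hd : deriv (fun t : ℝ => if t ≤ a^2 then C*(t - a^2) else C*a^2*(Real.log t - Real.log (a^2)))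
      = fun t => C * a^2 / max t (a^2) := funext fun t => (phi_key a C ha t).deriv
  rw [hd]
  exact continuous_const.div (continuous_id.max continuous_const)
    fun t => (lt_of_lt_of_le ha2 (le_max_right _ _)).ne'


/-- For `a > 0` and `C > 0`, the function `U = C(r² - a²)` for `r ≤ a`,
`U = 2Ca² ln(r/a)` for `r ≥ a` is a type-changing solution of equation (1) on
the whole plane: it is continuously differentiable on `ℝ²`, negative and a
wave-equation solution in `r < a`, zero on the circle `r = a`, and positive
and harmonic for `r > a`. -/
theorem whole_plane_eq1_type_changing
    (a C : ℝ) (ha : 0 < a) (hC : 0 < C)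
    (U : ℝ × ℝ → ℝ)
    (hU : ∀ p : ℝ × ℝ, U p =
      if p.1 ^ 2 + p.2 ^ 2 ≤ a ^ 2 then
        C * (p.1 ^ 2 + p.2 ^ 2 - a ^ 2)
      else
        2 * C * a ^ 2 * Real.log (Real.sqrt (p.1 ^ 2 + p.2 ^ 2) / a)) :
    ContDiff ℝ 1 U ∧
    (∀ p : ℝ × ℝ, p.1 ^ 2 + p.2 ^ 2 < a ^ 2 →
      U p < 0 ∧ pxx U p - pyy U p = 0) ∧
    (∀ p : ℝ × ℝ, p.1 ^ 2 + p.2 ^ 2 = a ^ 2 → U p = 0) ∧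
    (∀ p : ℝ × ℝ, a ^ 2 < p.1 ^ 2 + p.2 ^ 2 →
      0 < U p ∧ pxx U p + pyy U p = 0) := by
  have ha2 : (0:ℝ) < a^2 := by positivity
  refine ⟨?_, ?_, ?_, ?_⟩
  · -- ContDiff
    have hUeq : U = (fun t : ℝ => if t ≤ a^2 then C*(t - a^2)
        else C*a^2*(Real.log t - Real.log (a^2))) ∘ (fun p : ℝ × ℝ => p.1^2 + p.2^2) := by
      funext p
      rw [hU p]
      simp only [Function.comp]
      split_ifs with h
      · rfl
      · have hs : (0:ℝ) < p.1^2 + p.2^2 := lt_trans ha2 (not_le.1 h)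
        rw [← log_form a ha _ hs]; ring
    rw [hUeq]
    exact (phi_cd a C ha).comp (by fun_prop)
  · -- interior
    intro p hp
    constructor
    · rw [hU p, if_pos hp.le]
      exact mul_neg_of_pos_of_neg hC (by linarith)
    · have hevx : ∀ᶠ x in nhds p.1, x^2 + p.2^2 < a^2 :=
        ContinuousAt.eventually_lt (by fun_prop) continuousAt_const hp
      have hx : (fun x => U (x, p.2)) =ᶠ[nhds p.1] fun x => C * (x^2 + (p.2^2 - a^2)) := by
        filter_upwards [hevx] with x hx
        rw [hU (x, p.2)]
        simp only
        rw [if_pos hx.le]; ring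
      have hevy : ∀ᶠ y in nhds p.2, y^2 + p.1^2 < a^2 := by
        have : p.2^2 + p.1^2 < a^2 := by linarith
        exact ContinuousAt.eventually_lt (by fun_prop) continuousAt_const this
      have hy : (fun y => U (p.1, y)) =ᶠ[nhds p.2] fun y => C * (y^2 + (p.1^2 - a^2)) := by
        filter_upwards [hevy] with y hy
        rw [hU (p.1, y)]
        simp only
        rw [if_pos (by linarith)]; ring
      have e1 : pxx U p = 2*C := by
        unfold pxx; rw [hx.deriv.deriv_eq, dd_quad]
      have e2 : pyy U p = 2*C := by
        unfold pyy; rw [hy.deriv.deriv_eq, dd_quad]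
      rw [e1, e2, sub_self]
  · -- circle
    intro p hp
    rw [hU p, if_pos hp.le, hp, sub_self, mul_zero]
  · -- exterior
    intro p hp
    have hs : (0:ℝ) < p.1^2 + p.2^2 := lt_trans ha2 hp
    constructor
    · rw [hU p, if_neg (not_le.2 hp)]
      have h1 : 1 < Real.sqrt (p.1^2 + p.2^2) / a := by
        rw [lt_div_iff₀ ha, one_mul]
        calc a = Real.sqrt (a^2) := by rw [Real.sqrt_sq ha.le]
        _ < Real.sqrt (p.1^2 + p.2^2) := Real.sqrt_lt_sqrt ha2.le hp
      exact mul_pos (by positivity) (Real.log_pos h1)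
    · have hevx : ∀ᶠ x in nhds p.1, a^2 < x^2 + p.2^2 :=
        ContinuousAt.eventually_lt continuousAt_const (by fun_prop) hp
      have hx : (fun x => U (x, p.2)) =ᶠ[nhds p.1]
          fun x => (C*a^2) * (Real.log (x^2 + p.2^2) - Real.log (a^2)) := by
        filter_upwards [hevx] with x hx
        rw [hU (x, p.2)]
        simp only
        rw [if_neg (not_le.2 hx), ← log_form a ha _ (lt_trans ha2 hx)]; ring
      have hevy : ∀ᶠ y in nhds p.2, a^2 < y^2 + p.1^2 := by
        have : a^2 < p.2^2 + p.1^2 := by linarith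
        exact ContinuousAt.eventually_lt continuousAt_const (by fun_prop) this
      have hy : (fun y => U (p.1, y)) =ᶠ[nhds p.2]
          fun y => (C*a^2) * (Real.log (y^2 + p.1^2) - Real.log (a^2)) := by
        filter_upwards [hevy] with y hy
        rw [hU (p.1, y)]
        simp only
        rw [if_neg (not_le.2 (by linarith)), ← log_form a ha _ (lt_trans ha2 (by linarith))]
        ring
      have h1 : (0:ℝ) < p.1^2 + p.2^2 := hs
      have h2 : (0:ℝ) < p.2^2 + p.1^2 := by linarith
      have e1 : pxx U p = (C*a^2) * (2/(p.1^2+p.2^2) - 2*p.1*(2*p.1)/(p.1^2+p.2^2)^2) := by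
        unfold pxx; rw [hx.deriv.deriv_eq, dd_log _ _ _ _ h1]
      have e2 : pyy U p = (C*a^2) * (2/(p.2^2+p.1^2) - 2*p.2*(2*p.2)/(p.2^2+p.1^2)^2) := by
        unfold pyy; rw [hy.deriv.deriv_eq, dd_log _ _ _ _ h2]
      rw [e1, e2]
      have hc : p.2^2 + p.1^2 = p.1^2 + p.2^2 := by ring
      rw [hc]
      field_simp
      ring
end

section
/- Let f : [−1,0] → ℝ be continuously differentiable with f(−1) = 0 and f'(t) < 0 for all t ∈ (−1,0) (so f is strictly decreasing and f(x) < 0 on (−1,0]). Let D₂ = {(x,y) : y < 0, x + y > −1, x − y < 1}. Define U(x,y) = f((x−y−1)/2) − f((x+y−1)/2). Then U satisfies the wave equation ∂²U/∂x² − ∂²U/∂y² = 0 in D₂ (assuming f is twice differentiable), U(x, −x−1) = f(x) on the characteristic AC (for −1 ≤ x ≤ 0), U(x,0) = 0 for −1 ≤ x ≤ 1, U < 0 throughout D₂ (since (x−y−1)/2 > (x+y−1)/2 for y < 0 and f is decreasing), and ν(x) := ∂U/∂y(x,0) = −f'((x−1)/2) > 0 for −1 < x < 1. -/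
private lemma hAff (g : ℝ → ℝ) (hg : Differentiable ℝ g) (a b x : ℝ) :
    HasDerivAt (fun x => g (a * x + b)) (a * deriv g (a * x + b)) x := by
  have h1 : HasDerivAt (fun x : ℝ => a * x + b) a x := by
    simpa using ((hasDerivAt_id x).const_mul a).add_const b
  have h2 := (hg (a * x + b)).hasDerivAt.comp x h1
  rw [mul_comm] at h2
  exact h2

/-- "Bottom-up" construction in the characteristic triangle
`D₂ = {y < 0, x + y > -1, x - y < 1}`: for a twice continuously differentiable
`f` with `f(-1) = 0` and `f' < 0` on `(-1,0)`, the function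
`U(x,y) = f((x-y-1)/2) - f((x+y-1)/2)` satisfies the wave equation in `D₂`,
takes the value `f(x)` on the characteristic `AC : y = -x - 1` for
`x ∈ [-1,0]`, vanishes on the segment `y = 0`, `-1 ≤ x ≤ 1`, is negative
throughout `D₂`, and `ν(x) = ∂U/∂y(x,0) = -f'((x-1)/2) > 0` for
`-1 < x < 1`. -/
theorem tricomi_bottom_up_construction
    (f : ℝ → ℝ) (hf : ContDiff ℝ 2 f) (hf1 : f (-1) = 0)
    (hf' : ∀ t ∈ Set.Ioo (-1 : ℝ) 0, deriv f t < 0)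
    (U : ℝ × ℝ → ℝ)
    (hU : ∀ p : ℝ × ℝ,
      U p = f ((p.1 - p.2 - 1) / 2) - f ((p.1 + p.2 - 1) / 2)) :
    (∀ p : ℝ × ℝ, p.2 < 0 → -1 < p.1 + p.2 → p.1 - p.2 < 1 →
      pxx U p - pyy U p = 0 ∧ U p < 0) ∧
    (∀ x ∈ Set.Icc (-1 : ℝ) 0, U (x, -x - 1) = f x) ∧
    (∀ x ∈ Set.Icc (-1 : ℝ) 1, U (x, 0) = 0) ∧
    (∀ x ∈ Set.Ioo (-1 : ℝ) 1,
      deriv (fun t => U (x, t)) 0 = -deriv f ((x - 1) / 2) ∧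
      0 < -deriv f ((x - 1) / 2)) := by
  have hd : Differentiable ℝ f := hf.differentiable (by norm_num)
  have hf2 : ContDiff ℝ (1 + 1) f := by norm_num; exact hf
  have hcd : ContDiff ℝ 1 (deriv f) := (contDiff_succ_iff_deriv.mp hf2).2.2
  have hd' : Differentiable ℝ (deriv f) := hcd.differentiable (by norm_num)
  -- derivative in x
  have hx : ∀ y : ℝ, deriv (fun x => U (x, y)) =
      fun x => (1/2) * deriv f ((1/2) * x + ((-y - 1)/2))
        - (1/2) * deriv f ((1/2) * x + ((y - 1)/2)) := by
    intro y
    have heq : (fun x => U (x, y)) =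
        fun x => f ((1/2) * x + ((-y - 1)/2)) - f ((1/2) * x + ((y - 1)/2)) := by
      funext t; rw [hU]; congr 1 <;> (congr 1; ring)
    funext x
    rw [heq]
    exact ((hAff f hd (1/2) _ x).sub (hAff f hd (1/2) _ x)).deriv
  -- derivative in y
  have hy : ∀ x : ℝ, deriv (fun y => U (x, y)) =
      fun y => (-(1/2)) * deriv f ((-(1/2)) * y + ((x - 1)/2))
        - (1/2) * deriv f ((1/2) * y + ((x - 1)/2)) := by
    intro x
    have heq : (fun y => U (x, y)) =
        fun y => f ((-(1/2)) * y + ((x - 1)/2)) - f ((1/2) * y + ((x - 1)/2)) := by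
      funext t; rw [hU]; congr 1 <;> (congr 1; ring)
    funext y
    rw [heq]
    exact ((hAff f hd (-(1/2)) _ y).sub (hAff f hd (1/2) _ y)).deriv
  refine ⟨?_, ?_, ?_, ?_⟩
  · intro p hy0 hxy hxy'
    constructor
    · have hpxx : pxx U p =
          (1/2) * ((1/2) * deriv (deriv f) ((1/2) * p.1 + ((-p.2 - 1)/2)))
            - (1/2) * ((1/2) * deriv (deriv f) ((1/2) * p.1 + ((p.2 - 1)/2))) := by
        rw [pxx, hx p.2]
        exact (((hAff (deriv f) hd' (1/2) _ p.1).const_mul (1/2)).sub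
          ((hAff (deriv f) hd' (1/2) _ p.1).const_mul (1/2))).deriv
      have hpyy : pyy U p =
          (-(1/2)) * ((-(1/2)) * deriv (deriv f) ((-(1/2)) * p.2 + ((p.1 - 1)/2)))
            - (1/2) * ((1/2) * deriv (deriv f) ((1/2) * p.2 + ((p.1 - 1)/2))) := by
        rw [pyy, hy p.1]
        exact (((hAff (deriv f) hd' (-(1/2)) _ p.2).const_mul (-(1/2))).sub
          ((hAff (deriv f) hd' (1/2) _ p.2).const_mul (1/2))).deriv
      have e1 : (1/2) * p.1 + ((-p.2 - 1)/2) = (-(1/2)) * p.2 + ((p.1 - 1)/2) := by ring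
      have e2 : (1/2) * p.1 + ((p.2 - 1)/2) = (1/2) * p.2 + ((p.1 - 1)/2) := by ring
      rw [hpxx, hpyy, e1, e2]; ring
    · -- U p < 0
      set a := (p.1 - p.2 - 1) / 2 with ha
      set b := (p.1 + p.2 - 1) / 2 with hb
      have hba : b < a := by rw [ha, hb]; linarith
      have haI : a ∈ Set.Ioo (-1 : ℝ) 0 := by
        constructor <;> [skip; skip] <;> rw [ha] <;> · linarith
      have hbI : b ∈ Set.Ioo (-1 : ℝ) 0 := by
        constructor <;> rw [hb] <;> linarith
      have hanti : StrictAntiOn f (Set.Ioo (-1 : ℝ) 0) := by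
        apply strictAntiOn_of_deriv_neg (convex_Ioo _ _) (hd.continuous.continuousOn)
        intro t ht
        rw [interior_Ioo] at ht
        exact hf' t ht
      have := hanti hbI haI hba
      rw [hU]
      simp only [← ha, ← hb]
      linarith
  · intro x hx'
    rw [hU]
    have e1 : (x - (-x - 1) - 1) / 2 = x := by ring
    have e2 : (x + (-x - 1) - 1) / 2 = (-1 : ℝ) := by ring
    simp only [e1, e2, hf1, sub_zero]
  · intro x hx'
    rw [hU]
    norm_num
  · intro x hx'
    obtain ⟨h1, h2⟩ := hx'
    constructor
    · rw [hy x]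
      simp only [mul_zero, zero_add, neg_mul]
      ring
    · have : deriv f ((x - 1) / 2) < 0 := hf' _ ⟨by linarith, by linarith⟩
      linarith
end

section
/- Define W(x,y) = (y/4)·(3(x+1)² − y²) and V(x,y) = (y/4)·(3(x+1)² + y²). Then: (i) W satisfies the Laplace equation ∂²W/∂x² + ∂²W/∂y² = 0 on all of ℝ², W(x,0) = 0, and W(x,y) > 0 whenever 0 < y < √3·(x+1); (ii) V satisfies the wave equation ∂²V/∂x² − ∂²V/∂y² = 0 on all of ℝ², V(x,0) = 0, V(x,y) < 0 whenever y < 0 and x > −1, and V(x, −x−1) = −(1+x)³ on the characteristic y = −x − 1; (iii) ∂W/∂y(x,0) = ∂V/∂y(x,0) = 3(x+1)²/4, so W and V match to first order across y = 0. Hence the function equal to W for y ≥ 0 and V for y ≤ 0 is a continuously differentiable type-changing solution of equation (1) (with boundary value f(x) = −(1+x)³ on the characteristic AC: y = −x − 1) on any Tricomi-type domain whose upper part lies in {0 < y < √3·(x+1)} and whose lower part lies in the triangle {y < 0, x + y > −1, x − y < 1}. -/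
private lemma derivA (c d : ℝ) :
    deriv (fun x : ℝ => c * (x + 1) ^ 2 + d) = fun x => 2 * c * x + 2 * c := by
  funext x
  have h : HasDerivAt (fun x : ℝ => c * (x + 1) ^ 2 + d) (2 * c * x + 2 * c) x := by
    have h1 := ((((hasDerivAt_id x).add_const 1).pow 2).const_mul c).add_const d
    refine h1.congr_deriv ?_
    simp only [id_eq]
    push_cast
    ring
  exact h.deriv

private lemma derivA2 (c : ℝ) :
    deriv (fun x : ℝ => 2 * c * x + 2 * c) = fun _ => 2 * c := by
  funext x
  have h : HasDerivAt (fun x : ℝ => 2 * c * x + 2 * c) (2 * c) x := by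
    have h1 := ((hasDerivAt_id x).const_mul (2 * c)).add_const (2 * c)
    simpa using h1
  exact h.deriv

private lemma derivB (a b : ℝ) :
    deriv (fun y : ℝ => a * y + b * y ^ 3) = fun y => a + 3 * b * y ^ 2 := by
  funext y
  have h : HasDerivAt (fun y : ℝ => a * y + b * y ^ 3) (a + 3 * b * y ^ 2) y := by
    have h1 := ((hasDerivAt_id y).const_mul a).add (((hasDerivAt_pow 3 y)).const_mul b)
    refine h1.congr_deriv ?_
    push_cast
    ring
  exact h.deriv

private lemma derivB2 (a b : ℝ) :
    deriv (fun y : ℝ => a + 3 * b * y ^ 2) = fun y => 6 * b * y := by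
  funext y
  have h : HasDerivAt (fun y : ℝ => a + 3 * b * y ^ 2) (6 * b * y) y := by
    have h1 := (hasDerivAt_const y a).add ((hasDerivAt_pow 2 y).const_mul (3 * b))
    refine h1.congr_deriv ?_
    push_cast
    ring
  exact h.deriv

private lemma g_hasDeriv (y : ℝ) :
    HasDerivAt (fun z : ℝ => z ^ 2 * |z|) (3 * y * |y|) y := by
  rcases lt_trichotomy y 0 with hy | hy | hy
  · have h1 : HasDerivAt (fun z : ℝ => -(z ^ 3)) (-(3 * y ^ 2)) y := by
      have h := (hasDerivAt_pow 3 y).neg; simp at h; exact h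
    have heq : (fun z : ℝ => z ^ 2 * |z|) =ᶠ[nhds y] fun z => -(z ^ 3) := by
      filter_upwards [Iio_mem_nhds hy] with z hz
      rw [abs_of_neg hz]; ring
    have h2 := h1.congr_of_eventuallyEq heq
    refine h2.congr_deriv ?_
    rw [abs_of_neg hy]; ring
  · subst hy
    rw [hasDerivAt_iff_tendsto_slope]
    have h1 : Filter.Tendsto (fun z : ℝ => z * |z|) (nhdsWithin 0 {(0:ℝ)}ᶜ) (nhds (3 * 0 * |(0:ℝ)|)) := by
      have : Filter.Tendsto (fun z : ℝ => z * |z|) (nhds 0) (nhds (0 * |(0:ℝ)|)) :=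
        (continuous_id.mul continuous_abs).tendsto 0
      simpa using this.mono_left nhdsWithin_le_nhds
    refine h1.congr' ?_
    filter_upwards [self_mem_nhdsWithin] with z hz
    have hz' : z ≠ 0 := hz
    simp only [slope_def_field, div_eq_iff, sub_zero]
    field_simp
    ring
  · have h1 : HasDerivAt (fun z : ℝ => z ^ 3) ((3:ℕ) * y ^ 2) y := by
      simpa using hasDerivAt_pow 3 y
    have heq : (fun z : ℝ => z ^ 2 * |z|) =ᶠ[nhds y] fun z => z ^ 3 := by
      filter_upwards [Ioi_mem_nhds hy] with z hz
      rw [abs_of_pos hz]; ring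
    have h2 := h1.congr_of_eventuallyEq heq
    refine h2.congr_deriv ?_
    rw [abs_of_pos hy]; ring

private lemma g_contDiff : ContDiff ℝ 1 (fun z : ℝ => z ^ 2 * |z|) := by
  rw [contDiff_one_iff_deriv]
  constructor
  · exact fun y => (g_hasDeriv y).differentiableAt
  · have h : deriv (fun z : ℝ => z ^ 2 * |z|) = fun y => 3 * y * |y| :=
      funext fun y => (g_hasDeriv y).deriv
    rw [h]
    exact (continuous_const.mul continuous_id).mul continuous_abs

/-- Example for the Tricomi problem 2 with `f(x) = -(1+x)³`:
`W(x,y) = (y/4)(3(x+1)² - y²)` is harmonic on `ℝ²`, vanishes on `y = 0`, and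
is positive where `0 < y < √3 (x+1)`; `V(x,y) = (y/4)(3(x+1)² + y²)` satisfies
the wave equation on `ℝ²`, vanishes on `y = 0`, is negative where `y < 0` and
`x > -1`, and equals `-(1+x)³` on the characteristic `y = -x - 1`; both have
`∂/∂y` equal to `3(x+1)²/4` on `y = 0`, so the function equal to `W` for
`y ≥ 0` and to `V` for `y ≤ 0` is continuously differentiable: a type-changing
solution of equation (1). -/
theorem tricomi_example_cubic
    (W V : ℝ × ℝ → ℝ)
    (hW : ∀ p : ℝ × ℝ, W p = p.2 / 4 * (3 * (p.1 + 1) ^ 2 - p.2 ^ 2))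
    (hV : ∀ p : ℝ × ℝ, V p = p.2 / 4 * (3 * (p.1 + 1) ^ 2 + p.2 ^ 2)) :
    (∀ p : ℝ × ℝ, pxx W p + pyy W p = 0) ∧
    (∀ x : ℝ, W (x, 0) = 0) ∧
    (∀ p : ℝ × ℝ, 0 < p.2 → p.2 < Real.sqrt 3 * (p.1 + 1) → 0 < W p) ∧
    (∀ p : ℝ × ℝ, pxx V p - pyy V p = 0) ∧
    (∀ x : ℝ, V (x, 0) = 0) ∧
    (∀ p : ℝ × ℝ, p.2 < 0 → -1 < p.1 → V p < 0) ∧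
    (∀ x : ℝ, V (x, -x - 1) = -(1 + x) ^ 3) ∧
    (∀ x : ℝ, deriv (fun t => W (x, t)) 0 = 3 * (x + 1) ^ 2 / 4 ∧
      deriv (fun t => V (x, t)) 0 = 3 * (x + 1) ^ 2 / 4) ∧
    ContDiff ℝ 1 (fun p : ℝ × ℝ => if 0 ≤ p.2 then W p else V p) := by
  refine ⟨?_, ?_, ?_, ?_, ?_, ?_, ?_, ?_, ?_⟩
  · -- Laplace for W
    intro p
    have hx : (fun x => W (x, p.2)) = fun x => (3 * p.2 / 4) * (x + 1) ^ 2 + (-(p.2 ^ 3 / 4)) := by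
      funext x; rw [hW]; ring
    have hy : (fun y => W (p.1, y)) = fun y => (3 * (p.1 + 1) ^ 2 / 4) * y + (-(1/4)) * y ^ 3 := by
      funext y; rw [hW]; ring
    rw [pxx, pyy, hx, hy, derivA, derivA2, derivB, derivB2]
    ring
  · intro x; rw [hW]; norm_num
  · intro p h0 h1
    rw [hW]
    have hx1 : 0 < p.1 + 1 := by
      by_contra h
      push_neg at h
      have : Real.sqrt 3 * (p.1 + 1) ≤ 0 :=
        mul_nonpos_of_nonneg_of_nonpos (Real.sqrt_nonneg 3) h
      linarith
    have hsq : p.2 ^ 2 < (Real.sqrt 3 * (p.1 + 1)) ^ 2 := by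
      apply pow_lt_pow_left₀ h1 h0.le
      norm_num
    have h3 : (Real.sqrt 3 * (p.1 + 1)) ^ 2 = 3 * (p.1 + 1) ^ 2 := by
      rw [mul_pow, Real.sq_sqrt (by norm_num : (0:ℝ) ≤ 3)]
    rw [h3] at hsq
    have : 0 < 3 * (p.1 + 1) ^ 2 - p.2 ^ 2 := by linarith
    exact mul_pos (by linarith) this
  · -- wave for V
    intro p
    have hx : (fun x => V (x, p.2)) = fun x => (3 * p.2 / 4) * (x + 1) ^ 2 + (p.2 ^ 3 / 4) := by
      funext x; rw [hV]; ring
    have hy : (fun y => V (p.1, y)) = fun y => (3 * (p.1 + 1) ^ 2 / 4) * y + (1/4) * y ^ 3 := by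
      funext y; rw [hV]; ring
    rw [pxx, pyy, hx, hy, derivA, derivA2, derivB, derivB2]
    ring
  · intro x; rw [hV]; norm_num
  · intro p h2 h1
    rw [hV]
    have hx1 : 0 < p.1 + 1 := by linarith
    have : 0 < 3 * (p.1 + 1) ^ 2 + p.2 ^ 2 := by positivity
    exact mul_neg_of_neg_of_pos (by linarith) this
  · intro x; rw [hV]; ring
  · intro x
    constructor
    · have hy : (fun t => W (x, t)) = fun y => (3 * (x + 1) ^ 2 / 4) * y + (-(1/4)) * y ^ 3 := by
        funext y; rw [hW]; ring
      rw [hy, derivB]; ring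
    · have hy : (fun t => V (x, t)) = fun y => (3 * (x + 1) ^ 2 / 4) * y + (1/4) * y ^ 3 := by
        funext y; rw [hV]; ring
      rw [hy, derivB]; ring
  · have heq : (fun p : ℝ × ℝ => if 0 ≤ p.2 then W p else V p)
        = fun p => 3 * p.2 * (p.1 + 1) ^ 2 / 4 - p.2 ^ 2 * |p.2| / 4 := by
      funext p
      by_cases h : 0 ≤ p.2
      · rw [if_pos h, hW, abs_of_nonneg h]; ring
      · rw [if_neg h, hV, abs_of_neg (lt_of_not_ge h)]; ring
    rw [heq]
    have h1 : ContDiff ℝ 1 (fun p : ℝ × ℝ => 3 * p.2 * (p.1 + 1) ^ 2 / 4) := by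
      have : ContDiff ℝ 1 (fun p : ℝ × ℝ => 3 * p.2 * (p.1 + 1) ^ 2) := by fun_prop
      exact this.div_const 4
    have h2 : ContDiff ℝ 1 (fun p : ℝ × ℝ => p.2 ^ 2 * |p.2| / 4) :=
      (g_contDiff.comp contDiff_snd).div_const 4
    exact h1.sub h2
end
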